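/- arXiv:1410.4325 — 4 statements merged into one kernel-verified Lean document; each statement's English description precedes it below -/
import Mathlib

section
/- There exists x in the unit sphere of JH with inf_{α>0} diam S(B_{JH*}, x, α) = 0. In particular the unit ball of JH* has w*-slices of arbitrarily small diameter and JH* fails the w*-slice diameter two property. -/
open Metric

def dLe (a b : ℕ × ℕ) : Prop := a.1 ≤ b.1 ∧ b.2 / 2 ^ (b.1 - a.1) = a.2

def IsPQSegD (S : Finset (ℕ × ℕ)) (p q : ℕ) : Prop :=
  (∀ t ∈ S, t.2 < 2 ^ t.1) ∧
  (∀ t ∈ S, p ≤ t.1 ∧ t.1 ≤ q) ∧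
  (∀ k : ℕ, p ≤ k → k ≤ q → ∃! t, t ∈ S ∧ t.1 = k) ∧
  (∀ s ∈ S, ∀ t ∈ S, dLe s t ∨ dLe t s)

def AdmissibleD (F : Finset (Finset (ℕ × ℕ))) : Prop :=
  ∃ p q : ℕ, p ≤ q ∧ (∀ S ∈ F, IsPQSegD S p q) ∧
    ∀ S ∈ F, ∀ S' ∈ F, S ≠ S' → Disjoint S S'

noncomputable def jhNorm (x : (ℕ × ℕ) →₀ ℝ) : ℝ :=
  sSup {r : ℝ | ∃ F : Finset (Finset (ℕ × ℕ)), AdmissibleD F ∧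
    r = ∑ S ∈ F, |∑ t ∈ S, x t|}


noncomputable def xf : ℕ × ℕ → ℝ := fun t =>
  if t = (0,0) then 7/8 else if t = (1,0) then 1/8 else if t = (1,1) then -1/8
  else if t = (2,0) then -1/8 else if t = (2,1) then -1/8 else if t = (2,2) then -1/8
  else if t = (2,3) then 1/8 else 0

def DD : Finset (ℕ × ℕ) := {(0,0),(1,0),(1,1),(2,0),(2,1),(2,2),(2,3)}

noncomputable def xv : (ℕ × ℕ) →₀ ℝ :=
  Finsupp.onFinset DD xf (by
    intro a h
    by_contra hm
    apply h
    unfold xf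
    split_ifs with h1 h2 h3 h4 h5 h6 h7 <;>
      first
        | rfl
        | (exfalso; apply hm; subst_vars; decide))

lemma xv_00 : xv (0,0) = 7/8 := by norm_num [xv, xf, Prod.ext_iff]
lemma xv_10 : xv (1,0) = 1/8 := by norm_num [xv, xf, Prod.ext_iff]
lemma xv_11 : xv (1,1) = -1/8 := by norm_num [xv, xf, Prod.ext_iff]
lemma xv_20 : xv (2,0) = -1/8 := by norm_num [xv, xf, Prod.ext_iff]
lemma xv_21 : xv (2,1) = -1/8 := by norm_num [xv, xf, Prod.ext_iff]
lemma xv_22 : xv (2,2) = -1/8 := by norm_num [xv, xf, Prod.ext_iff]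
lemma xv_23 : xv (2,3) = 1/8 := by norm_num [xv, xf, Prod.ext_iff]

lemma xv_high {t : ℕ × ℕ} (h : 3 ≤ t.1) : xv t = 0 := by
  obtain ⟨a, b⟩ := t
  simp only [xv, Finsupp.onFinset_apply, xf]
  split_ifs with h1 h2 h3 h4 h5 h6 h7 <;> simp_all

lemma xv_mem_DD {t : ℕ × ℕ} (h : xv t ≠ 0) : t ∈ DD := by
  rw [xv, Finsupp.onFinset_apply] at h
  unfold xf at h
  split_ifs at h with h1 h2 h3 h4 h5 h6 h7 <;>
    first
      | (subst_vars; decide)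
      | exact absurd rfl h

def E6 : Finset (ℕ × ℕ) := {(1,0),(1,1),(2,0),(2,1),(2,2),(2,3)}

lemma E6_sum : ∑ t ∈ E6, |xv t| = 3/4 := by
  simp [E6, Finset.sum_insert, xv, xf, Prod.ext_iff]
  norm_num [abs_of_nonneg, abs_of_nonpos]

lemma sum_sum_abs_le (F : Finset (Finset (ℕ × ℕ)))
    (hdisj : ∀ S ∈ F, ∀ S' ∈ F, S ≠ S' → Disjoint S S') (g : ℕ × ℕ → ℝ)
    (E : Finset (ℕ × ℕ)) (hE : ∀ S ∈ F, ∀ t ∈ S, g t ≠ 0 → t ∈ E) :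
    ∑ S ∈ F, ∑ t ∈ S, |g t| ≤ ∑ t ∈ E, |g t| := by
  have h1 : ∀ S ∈ F, ∑ t ∈ S, |g t| = ∑ t ∈ S ∩ E, |g t| := by
    intro S hS
    refine (Finset.sum_subset Finset.inter_subset_left ?_).symm
    intro t ht hnot
    have : g t = 0 := by
      by_contra hg
      exact hnot (Finset.mem_inter.2 ⟨ht, hE S hS t ht hg⟩)
    simp [this]
  rw [Finset.sum_congr rfl h1]
  have hpd : (↑F : Set (Finset (ℕ × ℕ))).PairwiseDisjoint (· ∩ E) := by
    intro S hS S' hS' hne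
    exact (hdisj S hS S' hS' hne).mono Finset.inter_subset_left Finset.inter_subset_left
  rw [← Finset.sum_biUnion hpd]
  refine Finset.sum_le_sum_of_subset_of_nonneg ?_ (fun _ _ _ => abs_nonneg _)
  intro t ht
  obtain ⟨S, _, htS⟩ := Finset.mem_biUnion.1 ht
  exact (Finset.mem_inter.1 htS).2

lemma sum_abs_le (F : Finset (Finset (ℕ × ℕ)))
    (hdisj : ∀ S ∈ F, ∀ S' ∈ F, S ≠ S' → Disjoint S S') (g : ℕ × ℕ → ℝ)
    (E : Finset (ℕ × ℕ)) (hE : ∀ S ∈ F, ∀ t ∈ S, g t ≠ 0 → t ∈ E) :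
    ∑ S ∈ F, |∑ t ∈ S, g t| ≤ ∑ t ∈ E, |g t| := by
  refine le_trans (Finset.sum_le_sum ?_) (sum_sum_abs_le F hdisj g E hE)
  exact fun S _ => Finset.abs_sum_le_sum_abs _ _

lemma admissible_empty : AdmissibleD (∅ : Finset (Finset (ℕ × ℕ))) :=
  ⟨0, 0, le_refl 0, by simp, by simp⟩

lemma jhSet_nonempty (z : (ℕ × ℕ) →₀ ℝ) :
    Set.Nonempty {r : ℝ | ∃ F : Finset (Finset (ℕ × ℕ)), AdmissibleD F ∧
      r = ∑ S ∈ F, |∑ t ∈ S, z t|} :=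
  ⟨0, ∅, admissible_empty, by simp⟩

lemma jhSet_bddAbove (z : (ℕ × ℕ) →₀ ℝ) :
    BddAbove {r : ℝ | ∃ F : Finset (Finset (ℕ × ℕ)), AdmissibleD F ∧
      r = ∑ S ∈ F, |∑ t ∈ S, z t|} := by
  refine ⟨∑ t ∈ z.support, |z t|, ?_⟩
  rintro r ⟨F, ⟨p, q, _, _, hdisj⟩, rfl⟩
  exact sum_abs_le F hdisj z z.support (fun S _ t _ hz => Finsupp.mem_support_iff.2 hz)

lemma le_jhNorm {z : (ℕ × ℕ) →₀ ℝ} {F : Finset (Finset (ℕ × ℕ))} (hF : AdmissibleD F) :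
    ∑ S ∈ F, |∑ t ∈ S, z t| ≤ jhNorm z :=
  le_csSup (jhSet_bddAbove z) ⟨F, hF, rfl⟩

lemma jhNorm_le {z : (ℕ × ℕ) →₀ ℝ} {C : ℝ}
    (h : ∀ F : Finset (Finset (ℕ × ℕ)), AdmissibleD F → ∑ S ∈ F, |∑ t ∈ S, z t| ≤ C) :
    jhNorm z ≤ C := by
  apply csSup_le (jhSet_nonempty z)
  rintro r ⟨F, hF, rfl⟩
  exact h F hF

lemma key (F : Finset (Finset (ℕ × ℕ))) (hF : AdmissibleD F) (z : (ℕ × ℕ) →₀ ℝ) :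
    ∑ S ∈ F, |∑ t ∈ S, (xv t + z t)| ≤
      max (1 + (z (0,0) + z (1,0))) (7/8 + ∑ S ∈ F, |∑ t ∈ S, z t|) := by
  obtain ⟨p, q, hpq, hseg, hdisj⟩ := hF
  have hznn : (0:ℝ) ≤ ∑ S ∈ F, |∑ t ∈ S, z t| :=
    Finset.sum_nonneg fun _ _ => abs_nonneg _
  rcases Nat.eq_zero_or_pos p with hp0 | hp1
  · -- p = 0 : at most one segment, containing the root
    subst hp0
    rcases F.eq_empty_or_nonempty with rfl | ⟨S, hS⟩
    · simp only [Finset.sum_empty]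
      exact le_max_of_le_right (by norm_num)
    · have hroot : ∀ S' ∈ F, ((0,0) : ℕ × ℕ) ∈ S' := by
        intro S' hS'
        obtain ⟨h1, h2, h3, h4⟩ := hseg S' hS'
        obtain ⟨t, ⟨htS, ht1⟩, _⟩ := h3 0 (le_refl 0) (Nat.zero_le q)
        have h2t : t.2 < 2 ^ t.1 := h1 t htS
        rw [ht1] at h2t
        have ht : t = (0,0) := by
          obtain ⟨a, b⟩ := t
          simp_all
        rwa [ht] at htS
      have hFs : F = {S} := by
        refine Finset.eq_singleton_iff_unique_mem.2 ⟨hS, ?_⟩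
        intro S' hS'
        by_contra hne
        exact (Finset.disjoint_left.mp (hdisj S' hS' S hS hne) (hroot S' hS')) (hroot S hS)
      subst hFs
      rw [Finset.sum_singleton, Finset.sum_singleton]
      obtain ⟨h1, h2, h3, h4⟩ := hseg S (Finset.mem_singleton_self S)
      have hrootS : ((0,0) : ℕ × ℕ) ∈ S := hroot S (Finset.mem_singleton_self S)
      rcases q with _ | _ | q
      · -- q = 0
        have hSeq : S = {((0,0) : ℕ × ℕ)} := by
          refine Finset.eq_singleton_iff_unique_mem.2 ⟨hrootS, ?_⟩
          intro t ht
          have hlev := (h2 t ht).2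
          have h2t := h1 t ht
          obtain ⟨a, b⟩ := t
          dsimp only at hlev h2t
          have ha : a = 0 := by omega
          subst ha
          have hb : b = 0 := by simpa using h2t
          subst hb
          rfl
        subst hSeq
        rw [Finset.sum_singleton, Finset.sum_singleton, xv_00]
        refine le_max_of_le_right ?_
        calc |7/8 + z (0,0)| ≤ |(7:ℝ)/8| + |z (0,0)| := abs_add_le _ _
          _ ≤ 7/8 + |z (0,0)| := by
              rw [abs_of_nonneg (by norm_num : (0:ℝ) ≤ 7/8)]
      · -- q = 1
        obtain ⟨s₁, ⟨hs₁S, hs₁1⟩, huniq1⟩ := h3 1 (Nat.zero_le 1) (le_refl 1)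
        have hSeq : S = {((0,0) : ℕ × ℕ), s₁} := by
          ext t
          constructor
          · intro ht
            have hlev := (h2 t ht).2
            have h2t := h1 t ht
            simp only [Finset.mem_insert, Finset.mem_singleton]
            rcases Nat.lt_or_ge t.1 1 with hl | hl
            · left
              have h2t' := h1 t ht
              obtain ⟨a, b⟩ := t
              dsimp only at hl h2t'
              have ha : a = 0 := by omega
              subst ha
              have hb : b = 0 := by simpa using h2t'
              subst hb
              rfl
            · right
              exact huniq1 t ⟨ht, by omega⟩
          · intro ht
            simp only [Finset.mem_insert, Finset.mem_singleton] at ht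
            rcases ht with rfl | rfl
            · exact hrootS
            · exact hs₁S
        have hs₁2 : s₁.2 < 2 := by
          have := h1 s₁ hs₁S
          rw [hs₁1] at this
          simpa using this
        have hne : ((0,0) : ℕ × ℕ) ≠ s₁ := by
          intro h
          rw [← h] at hs₁1
          simp at hs₁1
        rw [hSeq, Finset.sum_pair hne, Finset.sum_pair hne]
        rcases (show s₁.2 = 0 ∨ s₁.2 = 1 by omega) with h0 | h0
        · -- s₁ = (1,0)
          have hs : s₁ = (1,0) := by
            obtain ⟨a, b⟩ := s₁
            dsimp only at hs₁1 h0
            subst hs₁1; subst h0; rfl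
          subst hs
          rw [xv_00, xv_10]
          set B := z (0,0) + z (1,0) with hB
          have heq : 7/8 + z (0,0) + (1/8 + z (1,0)) = 1 + B := by rw [hB]; ring
          rw [heq]
          rcases le_or_gt 0 (1 + B) with hpos | hneg
          · rw [abs_of_nonneg hpos]
            exact le_max_left _ _
          · rw [abs_of_neg hneg]
            refine le_max_of_le_right ?_
            have := neg_abs_le B
            have habs : |z (0,0) + z (1,0)| = |B| := by rw [hB]
            rw [habs]
            linarith
        · -- s₁ = (1,1)
          have hs : s₁ = (1,1) := by
            obtain ⟨a, b⟩ := s₁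
            dsimp only at hs₁1 h0
            subst hs₁1; subst h0; rfl
          subst hs
          rw [xv_00, xv_11]
          refine le_max_of_le_right ?_
          have h1' : 7/8 + z (0,0) + (-1/8 + z (1,1)) = 3/4 + (z (0,0) + z (1,1)) := by ring
          rw [h1']
          calc |3/4 + (z (0,0) + z (1,1))| ≤ |(3:ℝ)/4| + |z (0,0) + z (1,1)| := abs_add_le _ _
            _ ≤ 3/4 + |z (0,0) + z (1,1)| := by
                rw [abs_of_nonneg (by norm_num : (0:ℝ) ≤ 3/4)]
            _ ≤ 7/8 + |z (0,0) + z (1,1)| := by linarith [abs_nonneg (z (0,0) + z (1,1))]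
      · -- q ≥ 2
        obtain ⟨s₁, ⟨hs₁S, hs₁1⟩, huniq1⟩ := h3 1 (Nat.zero_le 1) (by omega)
        obtain ⟨s₂, ⟨hs₂S, hs₂1⟩, huniq2⟩ := h3 2 (Nat.zero_le 2) (by omega)
        have hs₁2 : s₁.2 < 2 := by
          have := h1 s₁ hs₁S; rw [hs₁1] at this; simpa using this
        have hs₂2 : s₂.2 < 4 := by
          have := h1 s₂ hs₂S; rw [hs₂1] at this; simpa using this
        have hchain : dLe s₁ s₂ := by
          rcases h4 s₁ hs₁S s₂ hs₂S with h | h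
          · exact h
          · exfalso; have := h.1; omega
        have hdiv : s₂.2 / 2 = s₁.2 := by
          have := hchain.2
          rw [hs₂1, hs₁1] at this
          simpa using this
        have h01 : ((0,0) : ℕ × ℕ) ≠ s₁ := fun h => by rw [← h] at hs₁1; simp at hs₁1
        have h02 : ((0,0) : ℕ × ℕ) ≠ s₂ := fun h => by rw [← h] at hs₂1; simp at hs₂1
        have h12 : s₁ ≠ s₂ := fun h => by rw [h, hs₂1] at hs₁1; simp at hs₁1
        have hsub : ({((0,0) : ℕ × ℕ), s₁, s₂} : Finset (ℕ × ℕ)) ⊆ S := by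
          intro t ht
          simp only [Finset.mem_insert, Finset.mem_singleton] at ht
          rcases ht with rfl | rfl | rfl
          · exact hrootS
          · exact hs₁S
          · exact hs₂S
        have hxsum : ∑ t ∈ S, xv t = xv (0,0) + xv s₁ + xv s₂ := by
          rw [← Finset.sum_subset hsub ?_]
          · have hnm1 : ((0,0) : ℕ × ℕ) ∉ ({s₁, s₂} : Finset (ℕ × ℕ)) := by
              simp only [Finset.mem_insert, Finset.mem_singleton]
              push_neg
              exact ⟨h01, h02⟩
            have hnm2 : s₁ ∉ ({s₂} : Finset (ℕ × ℕ)) := Finset.notMem_singleton.2 h12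
            rw [Finset.sum_insert hnm1, Finset.sum_insert hnm2, Finset.sum_singleton]
            ring
          · intro t ht hnot
            simp only [Finset.mem_insert, Finset.mem_singleton, not_or] at hnot
            obtain ⟨hn0, hn1, hn2⟩ := hnot
            rcases Nat.lt_or_ge t.1 3 with hl | hl
            · rcases (show t.1 = 0 ∨ t.1 = 1 ∨ t.1 = 2 by omega) with h' | h' | h'
              · exfalso
                apply hn0
                have h2t := h1 t ht
                obtain ⟨a, b⟩ := t
                dsimp only at h' h2t
                subst h'
                have hb : b = 0 := by simpa using h2t
                subst hb
                rfl
              · exact absurd (huniq1 t ⟨ht, h'⟩) hn1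
              · exact absurd (huniq2 t ⟨ht, h'⟩) hn2
            · exact xv_high hl
        have hxbound : |∑ t ∈ S, xv t| ≤ 7/8 := by
          rw [hxsum, xv_00]
          obtain ⟨a, b⟩ := s₁
          obtain ⟨c, d⟩ := s₂
          dsimp only at hs₁1 hs₂1 hdiv hs₁2 hs₂2
          subst hs₁1; subst hs₂1
          interval_cases d
          · have hb : b = 0 := by omega
            subst hb
            rw [xv_10, xv_20, abs_of_nonneg (by norm_num : (0:ℝ) ≤ 7/8 + 1/8 + -1/8)]
            norm_num
          · have hb : b = 0 := by omega
            subst hb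
            rw [xv_10, xv_21, abs_of_nonneg (by norm_num : (0:ℝ) ≤ 7/8 + 1/8 + -1/8)]
            norm_num
          · have hb : b = 1 := by omega
            subst hb
            rw [xv_11, xv_22, abs_of_nonneg (by norm_num : (0:ℝ) ≤ 7/8 + -1/8 + -1/8)]
            norm_num
          · have hb : b = 1 := by omega
            subst hb
            rw [xv_11, xv_23, abs_of_nonneg (by norm_num : (0:ℝ) ≤ 7/8 + -1/8 + 1/8)]
            norm_num
        refine le_max_of_le_right ?_
        have hsplit : ∑ t ∈ S, (xv t + z t) = (∑ t ∈ S, xv t) + ∑ t ∈ S, z t :=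
          Finset.sum_add_distrib
        rw [hsplit]
        calc |(∑ t ∈ S, xv t) + ∑ t ∈ S, z t| ≤ |∑ t ∈ S, xv t| + |∑ t ∈ S, z t| := abs_add_le _ _
          _ ≤ 7/8 + |∑ t ∈ S, z t| := by linarith
  · -- p ≥ 1
    refine le_max_of_le_right ?_
    have hterm : ∀ S ∈ F, |∑ t ∈ S, (xv t + z t)| ≤ (∑ t ∈ S, |xv t|) + |∑ t ∈ S, z t| := by
      intro S hS
      rw [Finset.sum_add_distrib]
      refine le_trans (abs_add_le _ _) ?_
      gcongr
      exact Finset.abs_sum_le_sum_abs _ _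
    refine le_trans (Finset.sum_le_sum hterm) ?_
    rw [Finset.sum_add_distrib]
    have hx : ∑ S ∈ F, ∑ t ∈ S, |xv t| ≤ 3/4 := by
      rw [← E6_sum]
      refine sum_sum_abs_le F hdisj xv E6 ?_
      intro S hS t ht hxz
      have hD := xv_mem_DD hxz
      have hlev : 1 ≤ t.1 := le_trans hp1 ((hseg S hS).2.1 t ht).1
      revert hD hlev
      obtain ⟨a, b⟩ := t
      intro hD hlev
      fin_cases hD <;> first | decide | simp at hlev
    linarith

def S0 : Finset (ℕ × ℕ) := {(0,0),(1,0)}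

lemma admissible_S0 : AdmissibleD {S0} := by
  refine ⟨0, 1, by omega, ?_, ?_⟩
  · intro S hS
    rw [Finset.mem_singleton] at hS
    subst hS
    refine ⟨?_, ?_, ?_, ?_⟩
    · intro t ht; fin_cases ht <;> norm_num
    · intro t ht; fin_cases ht <;> norm_num
    · intro k hk hk'
      rcases (show k = 0 ∨ k = 1 by omega) with rfl | rfl
      · refine ⟨((0,0) : ℕ × ℕ), ⟨by decide, rfl⟩, ?_⟩
        rintro t ⟨hm, hl⟩
        fin_cases hm
        · rfl
        · simp at hl
      · refine ⟨((1,0) : ℕ × ℕ), ⟨by decide, rfl⟩, ?_⟩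
        rintro t ⟨hm, hl⟩
        fin_cases hm
        · simp at hl
        · rfl
    · intro s hs t ht
      fin_cases hs <;> fin_cases ht <;> unfold dLe <;> norm_num
  · intro S hS S' hS' hne
    rw [Finset.mem_singleton] at hS hS'
    exact absurd (hS.trans hS'.symm) hne

lemma jhNorm_xv : jhNorm xv = 1 := by
  apply le_antisymm
  · apply jhNorm_le
    intro F hF
    have h := key F hF 0
    simp only [Finsupp.coe_zero, Pi.zero_apply, add_zero, abs_zero,
      Finset.sum_const_zero] at h
    refine le_trans h ?_
    norm_num
  · have h := le_jhNorm (z := xv) admissible_S0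
    rw [Finset.sum_singleton] at h
    have hs : ∑ t ∈ S0, xv t = 1 := by
      rw [S0, Finset.sum_pair (by decide), xv_00, xv_10]
      norm_num
    rw [hs] at h
    simpa using h

lemma val_smul (F : Finset (Finset (ℕ × ℕ))) {c : ℝ} (hc : 0 ≤ c) (y : (ℕ × ℕ) →₀ ℝ) :
    ∑ S ∈ F, |∑ t ∈ S, (c • y) t| = c * ∑ S ∈ F, |∑ t ∈ S, y t| := by
  rw [Finset.mul_sum]
  refine Finset.sum_congr rfl fun S _ => ?_
  rw [show ∑ t ∈ S, (c • y) t = c * ∑ t ∈ S, y t by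
    rw [Finset.mul_sum]; exact Finset.sum_congr rfl fun t _ => by
      simp [Finsupp.smul_apply]]
  rw [abs_mul, abs_of_nonneg hc]

lemma jhNorm_neg (y : (ℕ × ℕ) →₀ ℝ) : jhNorm (-y) = jhNorm y := by
  have hval : ∀ F : Finset (Finset (ℕ × ℕ)),
      ∑ S ∈ F, |∑ t ∈ S, (-y) t| = ∑ S ∈ F, |∑ t ∈ S, y t| := by
    intro F
    refine Finset.sum_congr rfl fun S _ => ?_
    rw [show ∑ t ∈ S, (-y) t = -∑ t ∈ S, y t by
      rw [← Finset.sum_neg_distrib]; exact Finset.sum_congr rfl fun t _ => by simp]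
    exact abs_neg _
  unfold jhNorm
  congr 1
  ext r
  constructor
  · rintro ⟨F, hF, rfl⟩
    exact ⟨F, hF, hval F⟩
  · rintro ⟨F, hF, rfl⟩
    exact ⟨F, hF, (hval F).symm⟩

lemma two {y : (ℕ × ℕ) →₀ ℝ} (hy : jhNorm y ≤ 1) :
    jhNorm (xv + (1/24 : ℝ) • y) ≤ max (1 + (y (0,0) + y (1,0))/24) (11/12) := by
  apply jhNorm_le
  intro F hF
  have h := key F hF ((1/24 : ℝ) • y)
  have hval24 := val_smul F (show (0:ℝ) ≤ 1/24 by norm_num) y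
  have hvy : ∑ S ∈ F, |∑ t ∈ S, y t| ≤ 1 := le_trans (le_jhNorm hF) hy
  have hgoal : ∑ S ∈ F, |∑ t ∈ S, (xv + (1/24:ℝ) • y) t|
      = ∑ S ∈ F, |∑ t ∈ S, (xv t + ((1/24:ℝ) • y) t)| := by
    simp [Finsupp.coe_add, Pi.add_apply]
  rw [hgoal]
  refine le_trans h (max_le_max ?_ ?_)
  · refine le_of_eq ?_
    simp only [Finsupp.smul_apply, smul_eq_mul]
    ring
  · rw [hval24]
    linarith

/-- There exists `x` in the unit sphere of `JH` such that the infimum over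
`α > 0` of the diameters of the w*-slices `S(B_{JH*}, x, α)` is `0`; in particular the unit
ball of `JH*` has w*-slices of arbitrarily small diameter. -/
theorem stmt7 (X : Type*) [NormedAddCommGroup X] [NormedSpace ℝ X] [CompleteSpace X]
    (e : ℕ × ℕ → X)
    (hnorm : ∀ x : (ℕ × ℕ) →₀ ℝ, (∀ t ∈ x.support, t.2 < 2 ^ t.1) →
      ‖∑ t ∈ x.support, x t • e t‖ = jhNorm x)
    (hdense : Dense (Submodule.span ℝ (e '' {t : ℕ × ℕ | t.2 < 2 ^ t.1}) : Set X)) :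
    ∃ x : X, ‖x‖ = 1 ∧
      sInf {d : ℝ | ∃ α : ℝ, 0 < α ∧
        d = Metric.diam {f : X →L[ℝ] ℝ | ‖f‖ ≤ 1 ∧ f x > 1 - α}} = 0 := by
  classical
  obtain ⟨T, hT⟩ : ∃ T : ((ℕ × ℕ) →₀ ℝ) →ₗ[ℝ] X, T = Finsupp.linearCombination ℝ e :=
    ⟨_, rfl⟩
  have hTnorm : ∀ c : (ℕ × ℕ) →₀ ℝ, (∀ t ∈ c.support, t.2 < 2 ^ t.1) → ‖T c‖ = jhNorm c := by
    intro c hc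
    rw [hT, Finsupp.linearCombination_apply, Finsupp.sum]
    exact hnorm c hc
  have hxv_tree : ∀ t ∈ xv.support, t.2 < 2 ^ t.1 := by
    intro t ht
    have hD := xv_mem_DD (Finsupp.mem_support_iff.1 ht)
    fin_cases hD <;> norm_num
  obtain ⟨v, hv⟩ : ∃ v : X, v = T xv := ⟨_, rfl⟩
  have hvnorm : ‖v‖ = 1 := by rw [hv, hTnorm xv hxv_tree, jhNorm_xv]
  refine ⟨v, hvnorm, ?_⟩
  -- diameter bound for slices
  have hdiam : ∀ α : ℝ, 0 < α →
      Metric.diam {f : X →L[ℝ] ℝ | ‖f‖ ≤ 1 ∧ f v > 1 - α} ≤ 48 * α := by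
    intro α hα
    apply Metric.diam_le_of_forall_dist_le (by positivity)
    rintro f ⟨hf1, hf2⟩ g ⟨hg1, hg2⟩
    rw [dist_eq_norm]
    refine ContinuousLinearMap.opNorm_le_bound _ (by positivity) ?_
    have hkey : ∀ w : X,
        w ∈ (Submodule.span ℝ (e '' {t : ℕ × ℕ | t.2 < 2 ^ t.1}) : Set X) →
        ‖(f - g) w‖ ≤ 48 * α * ‖w‖ := by
      intro w hw
      rw [SetLike.mem_coe] at hw
      obtain ⟨c, hc, hWc⟩ := (Finsupp.mem_span_image_iff_linearCombination ℝ).1 hw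
      by_cases hw0 : w = 0
      · rw [hw0]; simp
      have hWn : ‖w‖ ≠ 0 := norm_ne_zero_iff.2 hw0
      obtain ⟨y, hy⟩ : ∃ y : (ℕ × ℕ) →₀ ℝ, y = ‖w‖⁻¹ • c := ⟨_, rfl⟩
      have hctree : ∀ t ∈ c.support, t.2 < 2 ^ t.1 := by
        intro t ht
        exact (Finsupp.mem_supported ℝ c).1 hc ht
      have hytree : ∀ t ∈ y.support, t.2 < 2 ^ t.1 := by
        intro t ht
        rw [hy] at ht
        exact hctree t (Finsupp.support_smul ht)
      have hTy : T y = ‖w‖⁻¹ • w := by rw [hy, map_smul, hT, hWc]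
      have hyn : jhNorm y = 1 := by
        rw [← hTnorm y hytree, hTy, norm_smul, norm_inv, norm_norm]
        exact inv_mul_cancel₀ hWn
      have hsupp1 : ∀ t ∈ (xv + (1/24 : ℝ) • y).support, t.2 < 2 ^ t.1 := by
        intro t ht
        rcases Finset.mem_union.1 (Finsupp.support_add ht) with h | h
        · exact hxv_tree t h
        · exact hytree t (Finsupp.support_smul h)
      have hsupp2 : ∀ t ∈ (xv + (1/24 : ℝ) • (-y)).support, t.2 < 2 ^ t.1 := by
        intro t ht
        rcases Finset.mem_union.1 (Finsupp.support_add ht) with h | h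
        · exact hxv_tree t h
        · have h2 := Finsupp.support_smul h
          rw [Finsupp.support_neg] at h2
          exact hytree t h2
      have hq1 := two (le_of_eq hyn)
      have hq2 := two (y := -y) (by rw [jhNorm_neg]; exact le_of_eq hyn)
      have hrew : 1 + ((-y) (0,0) + (-y) (1,0))/24 = 1 - (y (0,0) + y (1,0))/24 := by
        simp only [Finsupp.coe_neg, Pi.neg_apply]
        ring
      rw [hrew] at hq2
      have hx1 : ‖v + (1/24 : ℝ) • T y‖ ≤ max (1 + (y (0,0) + y (1,0))/24) (11/12) := by
        have heq : v + (1/24 : ℝ) • T y = T (xv + (1/24 : ℝ) • y) := by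
          rw [hv, ← map_smul, ← map_add]
        rw [heq, hTnorm _ hsupp1]
        exact hq1
      have hx2 : ‖v - (1/24 : ℝ) • T y‖ ≤ max (1 - (y (0,0) + y (1,0))/24) (11/12) := by
        have heq : v - (1/24 : ℝ) • T y = T (xv + (1/24 : ℝ) • (-y)) := by
          rw [hv, map_add, map_smul, map_neg, smul_neg, sub_eq_add_neg]
        rw [heq, hTnorm _ hsupp2]
        exact hq2
      have hB : |y (0,0) + y (1,0)| ≤ 1 := by
        have h := le_jhNorm (z := y) admissible_S0
        rw [Finset.sum_singleton] at h
        have hs : ∑ t ∈ S0, y t = y (0,0) + y (1,0) := by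
          rw [S0, Finset.sum_pair (by decide)]
        rw [hs, hyn] at h
        exact h
      obtain ⟨u, hu⟩ : ∃ u : X, u = (1/24 : ℝ) • T y := ⟨_, rfl⟩
      have hsum2 : ‖v + u‖ + ‖v - u‖ ≤ 2 := by
        rw [hu]
        rcases abs_le.1 hB with ⟨hB1, hB2⟩
        rcases max_cases (1 + (y (0,0) + y (1,0))/24) (11/12 : ℝ) with ⟨hm1, _⟩ | ⟨hm1, _⟩ <;>
          rcases max_cases (1 - (y (0,0) + y (1,0))/24) (11/12 : ℝ) with ⟨hm2, _⟩ | ⟨hm2, _⟩ <;>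
          rw [hm1] at hx1 <;> rw [hm2] at hx2 <;> linarith
      have hfu : f (v + u) = f v + (1/24 : ℝ) * f (T y) := by
        rw [hu, map_add, map_smul, smul_eq_mul]
      have hgu : g (v - u) = g v - (1/24 : ℝ) * g (T y) := by
        rw [hu, map_sub, map_smul, smul_eq_mul]
      have hgu' : g (v + u) = g v + (1/24 : ℝ) * g (T y) := by
        rw [hu, map_add, map_smul, smul_eq_mul]
      have hfu' : f (v - u) = f v - (1/24 : ℝ) * f (T y) := by
        rw [hu, map_sub, map_smul, smul_eq_mul]
      have hfb : f (v + u) ≤ ‖v + u‖ := by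
        calc f (v + u) ≤ |f (v + u)| := le_abs_self _
          _ ≤ ‖f‖ * ‖v + u‖ := by
              rw [← Real.norm_eq_abs]; exact f.le_opNorm _
          _ ≤ 1 * ‖v + u‖ := mul_le_mul_of_nonneg_right hf1 (norm_nonneg _)
          _ = ‖v + u‖ := one_mul _
      have hgb : g (v - u) ≤ ‖v - u‖ := by
        calc g (v - u) ≤ |g (v - u)| := le_abs_self _
          _ ≤ ‖g‖ * ‖v - u‖ := by
              rw [← Real.norm_eq_abs]; exact g.le_opNorm _
          _ ≤ 1 * ‖v - u‖ := mul_le_mul_of_nonneg_right hg1 (norm_nonneg _)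
          _ = ‖v - u‖ := one_mul _
      have hgb' : g (v + u) ≤ ‖v + u‖ := by
        calc g (v + u) ≤ |g (v + u)| := le_abs_self _
          _ ≤ ‖g‖ * ‖v + u‖ := by
              rw [← Real.norm_eq_abs]; exact g.le_opNorm _
          _ ≤ 1 * ‖v + u‖ := mul_le_mul_of_nonneg_right hg1 (norm_nonneg _)
          _ = ‖v + u‖ := one_mul _
      have hfb' : f (v - u) ≤ ‖v - u‖ := by
        calc f (v - u) ≤ |f (v - u)| := le_abs_self _
          _ ≤ ‖f‖ * ‖v - u‖ := by
              rw [← Real.norm_eq_abs]; exact f.le_opNorm _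
          _ ≤ 1 * ‖v - u‖ := mul_le_mul_of_nonneg_right hf1 (norm_nonneg _)
          _ = ‖v - u‖ := one_mul _
      have hd1 : f (T y) - g (T y) ≤ 48 * α := by
        rw [hfu] at hfb
        rw [hgu] at hgb
        linarith [hsum2, hf2, hg2]
      have hd2 : g (T y) - f (T y) ≤ 48 * α := by
        rw [hgu'] at hgb'
        rw [hfu'] at hfb'
        linarith [hsum2, hf2, hg2]
      have habs : |(f - g) (T y)| ≤ 48 * α := by
        rw [abs_le]
        constructor
        · simp only [ContinuousLinearMap.sub_apply]
          linarith
        · simp only [ContinuousLinearMap.sub_apply]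
          linarith
      have hwTy : (f - g) w = ‖w‖ * ((f - g) (T y)) := by
        rw [hTy, map_smul, smul_eq_mul]
        field_simp
      rw [Real.norm_eq_abs, hwTy, abs_mul, abs_of_nonneg (norm_nonneg w)]
      calc ‖w‖ * |(f - g) (T y)| ≤ ‖w‖ * (48 * α) :=
            mul_le_mul_of_nonneg_left habs (norm_nonneg _)
        _ = 48 * α * ‖w‖ := by ring
    have hcl : IsClosed {w : X | ‖(f - g) w‖ ≤ 48 * α * ‖w‖} :=
      isClosed_le ((f - g).continuous.norm) (continuous_const.mul continuous_norm)
    intro w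
    have hsub : (Submodule.span ℝ (e '' {t : ℕ × ℕ | t.2 < 2 ^ t.1}) : Set X)
        ⊆ {w : X | ‖(f - g) w‖ ≤ 48 * α * ‖w‖} := hkey
    have hclos := hcl.closure_subset_iff.2 hsub
    rw [hdense.closure_eq] at hclos
    exact hclos (Set.mem_univ w)
  -- conclude
  have hbdd : ∀ d ∈ {d : ℝ | ∃ α : ℝ, 0 < α ∧
      d = Metric.diam {f : X →L[ℝ] ℝ | ‖f‖ ≤ 1 ∧ f v > 1 - α}}, 0 ≤ d := by
    rintro d ⟨α, hα, rfl⟩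
    exact Metric.diam_nonneg
  have hne : Set.Nonempty {d : ℝ | ∃ α : ℝ, 0 < α ∧
      d = Metric.diam {f : X →L[ℝ] ℝ | ‖f‖ ≤ 1 ∧ f v > 1 - α}} :=
    ⟨_, 1, one_pos, rfl⟩
  apply le_antisymm
  · refine le_of_forall_pos_le_add ?_
    intro ε hε
    have hmem : Metric.diam {f : X →L[ℝ] ℝ | ‖f‖ ≤ 1 ∧ f v > 1 - ε/48} ∈
        {d : ℝ | ∃ α : ℝ, 0 < α ∧
          d = Metric.diam {f : X →L[ℝ] ℝ | ‖f‖ ≤ 1 ∧ f v > 1 - α}} :=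
      ⟨ε/48, by positivity, rfl⟩
    calc sInf _ ≤ _ := csInf_le ⟨0, hbdd⟩ hmem
      _ ≤ 48 * (ε/48) := hdiam _ (by positivity)
      _ = 0 + ε := by ring
  · exact le_csInf hne hbdd
end

section
/- For 0 < ε < 1/4, the element x = (1−ε)e_{(0,0)} + ε e_{(1,0)} − ε e_{(1,1)} − ε e_{(2,0)} − ε e_{(2,1)} − ε e_{(2,2)} + ε e_{(2,3)} has JH-norm exactly 1, and the only admissible family of segments {S₁,…,S_r} with signs λᵢ ∈ {−1,1} satisfying Σᵢ λᵢ f_{Sᵢ}(x) > 1 − α, for 0 < α < min{1−4ε, ε}, is the single segment S₁ = {(0,0),(1,0)} with λ₁ = 1. -/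
open Metric

/-! ### Auxiliary material -/

noncomputable def segval (ε : ℝ) (S : Finset (ℕ × ℕ)) : ℝ :=
  (if ((0:ℕ),(0:ℕ)) ∈ S then 1 - ε else 0) + (if ((1:ℕ),(0:ℕ)) ∈ S then ε else 0)
  - (if ((1:ℕ),(1:ℕ)) ∈ S then ε else 0) - (if ((2:ℕ),(0:ℕ)) ∈ S then ε else 0)
  - (if ((2:ℕ),(1:ℕ)) ∈ S then ε else 0) - (if ((2:ℕ),(2:ℕ)) ∈ S then ε else 0)
  + (if ((2:ℕ),(3:ℕ)) ∈ S then ε else 0)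

lemma level_unique {S : Finset (ℕ × ℕ)} {p q : ℕ} (hS : IsPQSegD S p q)
    {s t : ℕ × ℕ} (hs : s ∈ S) (ht : t ∈ S) (h : s.1 = t.1) : s = t := by
  obtain ⟨u, -, huniq⟩ := hS.2.2.1 s.1 (hS.2.1 s hs).1 (hS.2.1 s hs).2
  rw [huniq s ⟨hs, rfl⟩, huniq t ⟨ht, h.symm⟩]

lemma exists_level {S : Finset (ℕ × ℕ)} {p q : ℕ} (hS : IsPQSegD S p q) {k : ℕ}
    (h1 : p ≤ k) (h2 : k ≤ q) : ∃ t ∈ S, t.1 = k := by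
  obtain ⟨t, ⟨ht, hk⟩, -⟩ := hS.2.2.1 k h1 h2
  exact ⟨t, ht, hk⟩

lemma not_mem_incomp {S : Finset (ℕ × ℕ)} {p q : ℕ} (hS : IsPQSegD S p q) {s t : ℕ × ℕ}
    (hs : s ∈ S) (h1 : ¬ dLe s t) (h2 : ¬ dLe t s) : t ∉ S :=
  fun ht => (hS.2.2.2 s hs t ht).elim h1 h2

lemma root_mem {S : Finset (ℕ × ℕ)} {q : ℕ} (hS : IsPQSegD S 0 q) :
    ((0:ℕ),(0:ℕ)) ∈ S := by
  obtain ⟨⟨t1, t2⟩, ht, hk⟩ := exists_level hS le_rfl (Nat.zero_le q)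
  simp only at hk
  subst hk
  have hb : t2 < 1 := by simpa using hS.1 _ ht
  have h0 : t2 = 0 := by omega
  subst h0
  exact ht

lemma seg_p3 {ε : ℝ} {S : Finset (ℕ × ℕ)} {p q : ℕ} (hp : 3 ≤ p)
    (hS : IsPQSegD S p q) : segval ε S = 0 := by
  have h : ∀ t : ℕ × ℕ, t.1 < 3 → t ∉ S := fun t hlt ht => by
    have := (hS.2.1 t ht).1; omega
  have h00 := h ((0:ℕ),(0:ℕ)) (by norm_num)
  have h10 := h ((1:ℕ),(0:ℕ)) (by norm_num)
  have h11 := h ((1:ℕ),(1:ℕ)) (by norm_num)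
  have h20 := h ((2:ℕ),(0:ℕ)) (by norm_num)
  have h21 := h ((2:ℕ),(1:ℕ)) (by norm_num)
  have h22 := h ((2:ℕ),(2:ℕ)) (by norm_num)
  have h23 := h ((2:ℕ),(3:ℕ)) (by norm_num)
  simp only [segval, if_neg h00, if_neg h10, if_neg h11, if_neg h20, if_neg h21,
    if_neg h22, if_neg h23]
  ring

lemma seg_p2 {ε : ℝ} (hε0 : 0 < ε) {S : Finset (ℕ × ℕ)} {q : ℕ} (hq : 2 ≤ q)
    (hS : IsPQSegD S 2 q) : |segval ε S| ≤ ε := by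
  have h : ∀ t : ℕ × ℕ, t.1 < 2 → t ∉ S := fun t hlt ht => by
    have := (hS.2.1 t ht).1; omega
  have h00 := h ((0:ℕ),(0:ℕ)) (by norm_num)
  have h10 := h ((1:ℕ),(0:ℕ)) (by norm_num)
  have h11 := h ((1:ℕ),(1:ℕ)) (by norm_num)
  have hu2 : ∀ a b : ℕ, ((2:ℕ),a) ∈ S → ((2:ℕ),b) ∈ S → a = b := fun a b ha hb => by
    simpa using level_unique hS ha hb rfl
  obtain ⟨⟨m1, m2⟩, hm, hk⟩ := exists_level hS le_rfl hq
  simp only at hk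
  subst hk
  have hb : m2 < 4 := by simpa using hS.1 _ hm
  interval_cases m2
  · have h21 : ((2:ℕ),(1:ℕ)) ∉ S := fun hh => by simpa using hu2 _ _ hm hh
    have h22 : ((2:ℕ),(2:ℕ)) ∉ S := fun hh => by simpa using hu2 _ _ hm hh
    have h23 : ((2:ℕ),(3:ℕ)) ∉ S := fun hh => by simpa using hu2 _ _ hm hh
    have hv : segval ε S = -ε := by
      simp only [segval, if_neg h00, if_neg h10, if_neg h11, if_pos hm, if_neg h21,
        if_neg h22, if_neg h23]
      ring
    rw [hv, abs_le]
    constructor <;> linarith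
  · have h20 : ((2:ℕ),(0:ℕ)) ∉ S := fun hh => by simpa using hu2 _ _ hm hh
    have h22 : ((2:ℕ),(2:ℕ)) ∉ S := fun hh => by simpa using hu2 _ _ hm hh
    have h23 : ((2:ℕ),(3:ℕ)) ∉ S := fun hh => by simpa using hu2 _ _ hm hh
    have hv : segval ε S = -ε := by
      simp only [segval, if_neg h00, if_neg h10, if_neg h11, if_neg h20, if_pos hm,
        if_neg h22, if_neg h23]
      ring
    rw [hv, abs_le]
    constructor <;> linarith
  · have h20 : ((2:ℕ),(0:ℕ)) ∉ S := fun hh => by simpa using hu2 _ _ hm hh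
    have h21 : ((2:ℕ),(1:ℕ)) ∉ S := fun hh => by simpa using hu2 _ _ hm hh
    have h23 : ((2:ℕ),(3:ℕ)) ∉ S := fun hh => by simpa using hu2 _ _ hm hh
    have hv : segval ε S = -ε := by
      simp only [segval, if_neg h00, if_neg h10, if_neg h11, if_neg h20, if_neg h21,
        if_pos hm, if_neg h23]
      ring
    rw [hv, abs_le]
    constructor <;> linarith
  · have h20 : ((2:ℕ),(0:ℕ)) ∉ S := fun hh => by simpa using hu2 _ _ hm hh
    have h21 : ((2:ℕ),(1:ℕ)) ∉ S := fun hh => by simpa using hu2 _ _ hm hh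
    have h22 : ((2:ℕ),(2:ℕ)) ∉ S := fun hh => by simpa using hu2 _ _ hm hh
    have hv : segval ε S = ε := by
      simp only [segval, if_neg h00, if_neg h10, if_neg h11, if_neg h20, if_neg h21,
        if_neg h22, if_pos hm]
      ring
    rw [hv, abs_le]
    constructor <;> linarith

lemma seg_p1 {ε : ℝ} (hε0 : 0 < ε) {S : Finset (ℕ × ℕ)} {q : ℕ} (hq : 1 ≤ q)
    (hS : IsPQSegD S 1 q) : |segval ε S| ≤ 2 * ε := by
  have h00 : ((0:ℕ),(0:ℕ)) ∉ S := fun ht => by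
    have := (hS.2.1 _ ht).1; norm_num at this
  have hu2 : ∀ a b : ℕ, ((2:ℕ),a) ∈ S → ((2:ℕ),b) ∈ S → a = b := fun a b ha hb => by
    simpa using level_unique hS ha hb rfl
  obtain ⟨⟨m1, m2⟩, hm, hk⟩ := exists_level hS le_rfl hq
  simp only at hk
  subst hk
  have hb : m2 < 2 := by simpa using hS.1 _ hm
  interval_cases m2
  · -- (1,0) ∈ S
    have h11 : ((1:ℕ),(1:ℕ)) ∉ S := fun hh => absurd (level_unique hS hm hh rfl) (by decide)
    have h22 : ((2:ℕ),(2:ℕ)) ∉ S := not_mem_incomp hS hm (by norm_num [dLe]) (by norm_num [dLe])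
    have h23 : ((2:ℕ),(3:ℕ)) ∉ S := not_mem_incomp hS hm (by norm_num [dLe]) (by norm_num [dLe])
    by_cases h20 : ((2:ℕ),(0:ℕ)) ∈ S
    · have h21 : ((2:ℕ),(1:ℕ)) ∉ S := fun hh => by simpa using hu2 _ _ h20 hh
      have hv : segval ε S = 0 := by
        simp only [segval, if_neg h00, if_pos hm, if_neg h11, if_pos h20, if_neg h21,
          if_neg h22, if_neg h23]
        ring
      rw [hv, abs_le]; constructor <;> linarith
    · by_cases h21 : ((2:ℕ),(1:ℕ)) ∈ S
      · have hv : segval ε S = 0 := by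
          simp only [segval, if_neg h00, if_pos hm, if_neg h11, if_neg h20, if_pos h21,
            if_neg h22, if_neg h23]
          ring
        rw [hv, abs_le]; constructor <;> linarith
      · have hv : segval ε S = ε := by
          simp only [segval, if_neg h00, if_pos hm, if_neg h11, if_neg h20, if_neg h21,
            if_neg h22, if_neg h23]
          ring
        rw [hv, abs_le]; constructor <;> linarith
  · -- (1,1) ∈ S
    have h10 : ((1:ℕ),(0:ℕ)) ∉ S := fun hh => absurd (level_unique hS hm hh rfl) (by decide)
    have h20 : ((2:ℕ),(0:ℕ)) ∉ S := not_mem_incomp hS hm (by norm_num [dLe]) (by norm_num [dLe])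
    have h21 : ((2:ℕ),(1:ℕ)) ∉ S := not_mem_incomp hS hm (by norm_num [dLe]) (by norm_num [dLe])
    by_cases h22 : ((2:ℕ),(2:ℕ)) ∈ S
    · have h23 : ((2:ℕ),(3:ℕ)) ∉ S := fun hh => by simpa using hu2 _ _ h22 hh
      have hv : segval ε S = -(2*ε) := by
        simp only [segval, if_neg h00, if_neg h10, if_pos hm, if_neg h20, if_neg h21,
          if_pos h22, if_neg h23]
        ring
      rw [hv, abs_le]; constructor <;> linarith
    · by_cases h23 : ((2:ℕ),(3:ℕ)) ∈ S
      · have hv : segval ε S = 0 := by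
          simp only [segval, if_neg h00, if_neg h10, if_pos hm, if_neg h20, if_neg h21,
            if_neg h22, if_pos h23]
          ring
        rw [hv, abs_le]; constructor <;> linarith
      · have hv : segval ε S = -ε := by
          simp only [segval, if_neg h00, if_neg h10, if_pos hm, if_neg h20, if_neg h21,
            if_neg h22, if_neg h23]
          ring
        rw [hv, abs_le]; constructor <;> linarith

lemma seg_p0 {ε : ℝ} (hε0 : 0 < ε) {S : Finset (ℕ × ℕ)} {q : ℕ}
    (hS : IsPQSegD S 0 q) :
    1 - 3*ε ≤ segval ε S ∧ segval ε S ≤ 1 ∧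
      (1 - ε < segval ε S → segval ε S = 1 ∧ S = {((0:ℕ),(0:ℕ)), ((1:ℕ),(0:ℕ))}) := by
  have h00 : ((0:ℕ),(0:ℕ)) ∈ S := root_mem hS
  by_cases hq : 1 ≤ q
  case neg =>
    have h : ∀ t : ℕ × ℕ, 1 ≤ t.1 → t ∉ S := fun t h1 ht => by
      have := (hS.2.1 t ht).2; omega
    have h10 := h ((1:ℕ),(0:ℕ)) (by norm_num)
    have h11 := h ((1:ℕ),(1:ℕ)) (by norm_num)
    have h20 := h ((2:ℕ),(0:ℕ)) (by norm_num)
    have h21 := h ((2:ℕ),(1:ℕ)) (by norm_num)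
    have h22 := h ((2:ℕ),(2:ℕ)) (by norm_num)
    have h23 := h ((2:ℕ),(3:ℕ)) (by norm_num)
    have hv : segval ε S = 1 - ε := by
      simp only [segval, if_pos h00, if_neg h10, if_neg h11, if_neg h20, if_neg h21,
        if_neg h22, if_neg h23]
      ring
    rw [hv]
    exact ⟨by linarith, by linarith, fun h' => absurd h' (by linarith)⟩
  case pos =>
    obtain ⟨⟨m1, m2⟩, hm, hk⟩ := exists_level hS (Nat.zero_le 1) hq
    simp only at hk
    subst hk
    have hb : m2 < 2 := by simpa using hS.1 _ hm
    have hu2 : ∀ a b : ℕ, ((2:ℕ),a) ∈ S → ((2:ℕ),b) ∈ S → a = b := fun a b ha hb => by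
      simpa using level_unique hS ha hb rfl
    interval_cases m2
    · -- (1,0) ∈ S
      have h11 : ((1:ℕ),(1:ℕ)) ∉ S := fun hh => absurd (level_unique hS hm hh rfl) (by decide)
      have h22 : ((2:ℕ),(2:ℕ)) ∉ S := not_mem_incomp hS hm (by norm_num [dLe]) (by norm_num [dLe])
      have h23 : ((2:ℕ),(3:ℕ)) ∉ S := not_mem_incomp hS hm (by norm_num [dLe]) (by norm_num [dLe])
      by_cases h20 : ((2:ℕ),(0:ℕ)) ∈ S
      · have h21 : ((2:ℕ),(1:ℕ)) ∉ S := fun hh => by simpa using hu2 _ _ h20 hh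
        have hv : segval ε S = 1 - ε := by
          simp only [segval, if_pos h00, if_pos hm, if_neg h11, if_pos h20, if_neg h21,
            if_neg h22, if_neg h23]
          ring
        rw [hv]
        exact ⟨by linarith, by linarith, fun h' => absurd h' (by linarith)⟩
      · by_cases h21 : ((2:ℕ),(1:ℕ)) ∈ S
        · have hv : segval ε S = 1 - ε := by
            simp only [segval, if_pos h00, if_pos hm, if_neg h11, if_neg h20, if_pos h21,
              if_neg h22, if_neg h23]
            ring
          rw [hv]
          exact ⟨by linarith, by linarith, fun h' => absurd h' (by linarith)⟩
        · have hv : segval ε S = 1 := by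
            simp only [segval, if_pos h00, if_pos hm, if_neg h11, if_neg h20, if_neg h21,
              if_neg h22, if_neg h23]
            ring
          rw [hv]
          refine ⟨by linarith, le_rfl, fun _ => ⟨rfl, ?_⟩⟩
          apply Finset.Subset.antisymm
          · intro t ht
            obtain ⟨t1, t2⟩ := t
            simp only [Finset.mem_insert, Finset.mem_singleton]
            have hbt := hS.1 _ ht
            rcases Nat.lt_or_ge t1 2 with hlt | hge
            · interval_cases t1
              · left
                have hb1 : t2 < 1 := by simpa using hbt
                have : t2 = 0 := by omega
                subst this; rfl
              · right
                have hb1 : t2 < 2 := by simpa using hbt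
                interval_cases t2
                · rfl
                · exact absurd ht h11
            · exfalso
              have hq2 : 2 ≤ q := le_trans hge (hS.2.1 _ ht).2
              obtain ⟨⟨u1, u2⟩, hu, hku⟩ := exists_level hS (Nat.zero_le 2) hq2
              simp only at hku
              subst hku
              have hbu : u2 < 4 := by simpa using hS.1 _ hu
              interval_cases u2
              · exact h20 hu
              · exact h21 hu
              · exact h22 hu
              · exact h23 hu
          · intro t ht
            simp only [Finset.mem_insert, Finset.mem_singleton] at ht
            rcases ht with rfl | rfl
            · exact h00
            · exact hm
    · -- (1,1) ∈ S
      have h10 : ((1:ℕ),(0:ℕ)) ∉ S := fun hh => absurd (level_unique hS hm hh rfl) (by decide)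
      have h20 : ((2:ℕ),(0:ℕ)) ∉ S := not_mem_incomp hS hm (by norm_num [dLe]) (by norm_num [dLe])
      have h21 : ((2:ℕ),(1:ℕ)) ∉ S := not_mem_incomp hS hm (by norm_num [dLe]) (by norm_num [dLe])
      by_cases h22 : ((2:ℕ),(2:ℕ)) ∈ S
      · have h23 : ((2:ℕ),(3:ℕ)) ∉ S := fun hh => by simpa using hu2 _ _ h22 hh
        have hv : segval ε S = 1 - 3*ε := by
          simp only [segval, if_pos h00, if_neg h10, if_pos hm, if_neg h20, if_neg h21,
            if_pos h22, if_neg h23]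
          ring
        rw [hv]
        exact ⟨le_rfl, by linarith, fun h' => absurd h' (by linarith)⟩
      · by_cases h23 : ((2:ℕ),(3:ℕ)) ∈ S
        · have hv : segval ε S = 1 - ε := by
            simp only [segval, if_pos h00, if_neg h10, if_pos hm, if_neg h20, if_neg h21,
              if_neg h22, if_pos h23]
            ring
          rw [hv]
          exact ⟨by linarith, by linarith, fun h' => absurd h' (by linarith)⟩
        · have hv : segval ε S = 1 - 2*ε := by
            simp only [segval, if_pos h00, if_neg h10, if_pos hm, if_neg h20, if_neg h21,
              if_neg h22, if_neg h23]
            ring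
          rw [hv]
          exact ⟨by linarith, by linarith, fun h' => absurd h' (by linarith)⟩

lemma card_bound {F : Finset (Finset (ℕ × ℕ))} {p q : ℕ} (hpq : p ≤ q)
    (hseg : ∀ S ∈ F, IsPQSegD S p q)
    (hdis : ∀ S ∈ F, ∀ S' ∈ F, S ≠ S' → Disjoint S S') :
    F.card ≤ 2 ^ p := by
  classical
  set g : Finset (ℕ × ℕ) → ℕ × ℕ := fun S =>
    if h : ∃ t : ℕ × ℕ, t ∈ S ∧ t.1 = p then h.choose else (0,0) with hg
  have hmem : ∀ S ∈ F, g S ∈ S ∧ (g S).1 = p := by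
    intro S hS
    have hex : ∃ t : ℕ × ℕ, t ∈ S ∧ t.1 = p := by
      obtain ⟨t, ht, hk⟩ := exists_level (hseg S hS) le_rfl hpq
      exact ⟨t, ht, hk⟩
    rw [hg]
    simp only [dif_pos hex]
    exact hex.choose_spec
  have hcard : F.card ≤ ((Finset.range (2^p)).image (fun j => ((p, j) : ℕ × ℕ))).card := by
    apply Finset.card_le_card_of_injOn g
    · intro S hS
      obtain ⟨h1, h2⟩ := hmem S hS
      have hb : (g S).2 < 2 ^ p := by
        have := (hseg S hS).1 _ h1
        rwa [h2] at this
      simp only [Finset.mem_coe, Finset.mem_image, Finset.mem_range]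
      exact ⟨(g S).2, hb, by rw [← h2]⟩
    · intro S hS S' hS' hgeq
      simp only [Finset.mem_coe] at hS hS'
      by_contra hne
      have hd := hdis S hS S' hS' hne
      have h1 := (hmem S hS).1
      have h2 := (hmem S' hS').1
      rw [hgeq] at h1
      exact Finset.disjoint_left.mp hd h1 h2
  calc F.card ≤ _ := hcard
    _ ≤ (Finset.range (2^p)).card := Finset.card_image_le
    _ = 2 ^ p := Finset.card_range _

lemma fam_p0 {F : Finset (Finset (ℕ × ℕ))} {q : ℕ}
    (hseg : ∀ S ∈ F, IsPQSegD S 0 q)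
    (hdis : ∀ S ∈ F, ∀ S' ∈ F, S ≠ S' → Disjoint S S') :
    F = ∅ ∨ ∃ S, F = {S} ∧ IsPQSegD S 0 q := by
  rcases Finset.eq_empty_or_nonempty F with h | ⟨S, hSF⟩
  · exact Or.inl h
  · right
    refine ⟨S, Finset.eq_singleton_iff_unique_mem.mpr ⟨hSF, ?_⟩, hseg S hSF⟩
    intro S' hS'
    by_contra hne
    have hd := hdis S' hS' S hSF hne
    exact Finset.disjoint_left.mp hd (root_mem (hseg S' hS')) (root_mem (hseg S hSF))

lemma fam_bound {ε : ℝ} (hε0 : 0 < ε) {F : Finset (Finset (ℕ × ℕ))} {p q : ℕ}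
    (hp : 1 ≤ p) (hpq : p ≤ q)
    (hseg : ∀ S ∈ F, IsPQSegD S p q)
    (hdis : ∀ S ∈ F, ∀ S' ∈ F, S ≠ S' → Disjoint S S') :
    ∑ S ∈ F, |segval ε S| ≤ 4 * ε := by
  have hcard := card_bound hpq hseg hdis
  match p, hp, hpq, hseg, hcard with
  | 1, _, hpq, hseg, hcard =>
    have h1 : ∀ S ∈ F, |segval ε S| ≤ 2 * ε := fun S hS => seg_p1 hε0 hpq (hseg S hS)
    have h2 := Finset.sum_le_card_nsmul F _ _ h1
    rw [nsmul_eq_mul] at h2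
    have hc : (F.card : ℝ) ≤ 2 := by exact_mod_cast hcard.trans (by norm_num)
    nlinarith
  | 2, _, hpq, hseg, hcard =>
    have h1 : ∀ S ∈ F, |segval ε S| ≤ ε := fun S hS => seg_p2 hε0 hpq (hseg S hS)
    have h2 := Finset.sum_le_card_nsmul F _ _ h1
    rw [nsmul_eq_mul] at h2
    have hc : (F.card : ℝ) ≤ 4 := by exact_mod_cast hcard.trans (by norm_num)
    nlinarith
  | (n+3), _, hpq, hseg, hcard =>
    have h1 : ∀ S ∈ F, |segval ε S| = 0 := fun S hS => by
      rw [seg_p3 (by omega) (hseg S hS), abs_zero]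
    rw [Finset.sum_eq_zero h1]
    linarith

/-- For `0 < ε < 1/4`, the element
`x = (1-ε)e_{(0,0)} + ε e_{(1,0)} - ε e_{(1,1)} - ε e_{(2,0)} - ε e_{(2,1)} - ε e_{(2,2)} + ε e_{(2,3)}`
has `JH`-norm exactly `1`, and for `0 < α < min (1 - 4ε) ε` the only admissible family of
segments with signs whose associated functional exceeds `1 - α` at `x` is the single
segment `{(0,0), (1,0)}` with sign `+1`. -/
theorem stmt8 (ε : ℝ) (hε0 : 0 < ε) (hε : ε < 1 / 4)
    (α : ℝ) (hα0 : 0 < α) (hα : α < min (1 - 4 * ε) ε)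
    (x : (ℕ × ℕ) →₀ ℝ)
    (hx : x = Finsupp.single ((0 : ℕ), (0 : ℕ)) (1 - ε) + Finsupp.single (1, 0) ε
      - Finsupp.single (1, 1) ε - Finsupp.single (2, 0) ε - Finsupp.single (2, 1) ε
      - Finsupp.single (2, 2) ε + Finsupp.single (2, 3) ε) :
    jhNorm x = 1 ∧
    ∀ (F : Finset (Finset (ℕ × ℕ))) (σ : Finset (ℕ × ℕ) → ℝ),
      AdmissibleD F → (∀ S ∈ F, σ S = 1 ∨ σ S = -1) →
      (∑ S ∈ F, σ S * ∑ t ∈ S, x t) > 1 - α →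
      F = {({((0 : ℕ), (0 : ℕ)), (1, 0)} : Finset (ℕ × ℕ))} ∧
        σ {((0 : ℕ), (0 : ℕ)), (1, 0)} = 1 := by
  have hα1 : α < 1 - 4 * ε := lt_of_lt_of_le hα (min_le_left _ _)
  have hα2 : α < ε := lt_of_lt_of_le hα (min_le_right _ _)
  have hxv : ∀ S : Finset (ℕ × ℕ), ∑ t ∈ S, x t = segval ε S := by
    intro S
    subst hx
    simp only [Finsupp.coe_add, Finsupp.coe_sub, Pi.add_apply, Pi.sub_apply,
      Finset.sum_add_distrib, Finset.sum_sub_distrib, Finsupp.single_apply,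
      Finset.sum_ite_eq, segval]
  -- the distinguished segment
  have hS0seg : IsPQSegD ({((0:ℕ),(0:ℕ)), ((1:ℕ),(0:ℕ))} : Finset (ℕ × ℕ)) 0 1 := by
    refine ⟨?_, ?_, ?_, ?_⟩
    · intro t ht; fin_cases ht <;> norm_num
    · intro t ht; fin_cases ht <;> simp
    · intro k h0 h1
      interval_cases k
      · refine ⟨((0:ℕ),(0:ℕ)), ⟨by simp, rfl⟩, ?_⟩
        rintro t ⟨ht, htk⟩
        fin_cases ht <;> simp_all
      · refine ⟨((1:ℕ),(0:ℕ)), ⟨by simp, rfl⟩, ?_⟩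
        rintro t ⟨ht, htk⟩
        fin_cases ht <;> simp_all
    · intro s hs t ht
      fin_cases hs <;> fin_cases ht <;> norm_num [dLe]
  have hS0val : segval ε ({((0:ℕ),(0:ℕ)), ((1:ℕ),(0:ℕ))} : Finset (ℕ × ℕ)) = 1 := by
    simp only [segval]
    rw [if_pos (by decide), if_pos (by decide), if_neg (by decide), if_neg (by decide),
      if_neg (by decide), if_neg (by decide), if_neg (by decide)]
    ring
  have hub : ∀ r ∈ {r : ℝ | ∃ F : Finset (Finset (ℕ × ℕ)), AdmissibleD F ∧
      r = ∑ S ∈ F, |∑ t ∈ S, x t|}, r ≤ 1 := by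
    rintro r ⟨F, ⟨p, q, hpq, hseg, hdis⟩, rfl⟩
    simp only [hxv]
    rcases Nat.eq_zero_or_pos p with rfl | hp
    · rcases fam_p0 hseg hdis with rfl | ⟨S, rfl, hSseg⟩
      · simp
      · rw [Finset.sum_singleton]
        obtain ⟨hlo, hhi, -⟩ := seg_p0 hε0 hSseg
        rw [abs_le]
        constructor <;> linarith
    · have := fam_bound hε0 hp hpq hseg hdis
      linarith
  have hmem : (1 : ℝ) ∈ {r : ℝ | ∃ F : Finset (Finset (ℕ × ℕ)), AdmissibleD F ∧
      r = ∑ S ∈ F, |∑ t ∈ S, x t|} := by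
    refine ⟨{({((0:ℕ),(0:ℕ)), ((1:ℕ),(0:ℕ))} : Finset (ℕ × ℕ))}, ⟨0, 1, by norm_num, ?_, ?_⟩, ?_⟩
    · intro S hS
      simp only [Finset.mem_singleton] at hS
      subst hS
      exact hS0seg
    · intro S hS S' hS' hne
      simp only [Finset.mem_singleton] at hS hS'
      subst hS; subst hS'
      exact absurd rfl hne
    · rw [Finset.sum_singleton, hxv, hS0val]
      norm_num
  constructor
  · unfold jhNorm
    exact le_antisymm (csSup_le ⟨1, hmem⟩ hub) (le_csSup ⟨1, fun r hr => hub r hr⟩ hmem)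
  · intro F σ hF hσ hgt
    obtain ⟨p, q, hpq, hseg, hdis⟩ := hF
    simp only [hxv] at hgt
    have hle : ∑ S ∈ F, σ S * segval ε S ≤ ∑ S ∈ F, |segval ε S| := by
      apply Finset.sum_le_sum
      intro S hS
      rcases hσ S hS with h | h
      · rw [h, one_mul]; exact le_abs_self _
      · rw [h, neg_one_mul]; exact neg_le_abs _
    rcases Nat.eq_zero_or_pos p with rfl | hp
    · rcases fam_p0 hseg hdis with rfl | ⟨S, rfl, hSseg⟩
      · exfalso
        rw [Finset.sum_empty] at hgt
        linarith
      · rw [Finset.sum_singleton] at hgt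
        obtain ⟨hlo, hhi, huniq⟩ := seg_p0 hε0 hSseg
        rcases hσ S (Finset.mem_singleton_self S) with h1 | h1
        · rw [h1, one_mul] at hgt
          obtain ⟨-, hSeq⟩ := huniq (by linarith)
          subst hSeq
          exact ⟨rfl, h1⟩
        · exfalso
          rw [h1, neg_one_mul] at hgt
          linarith
    · exfalso
      have := fam_bound hε0 hp hpq hseg hdis
      linarith
end

section
/- JH_∞ contains an isometric copy of ℓ₁: if {αₙ} is an infinite sequence of immediate successors of the root ∅ in T, then the closed linear span of {e_{αₙ}} in JH_∞ is isometrically isomorphic to ℓ₁, with {e_{αₙ}} corresponding to the canonical basis. In particular JH_∞ is not isomorphic to JH (which contains no isomorphic copy of ℓ₁). -/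
open Metric

/-- A segment in the tree `T` of finite sequences of naturals: a finite subset totally
ordered under the prefix (extension) order. -/
def SegL (S : Finset (List ℕ)) : Prop :=
  ∀ s ∈ S, ∀ t ∈ S, s <+: t ∨ t <+: s

/-- An `n–m` segment: a nonempty segment whose least element has level (length) `n` and
whose greatest element has level `m`. -/
def IsNMSeg (S : Finset (List ℕ)) (n m : ℕ) : Prop :=
  SegL S ∧ (∀ t ∈ S, n ≤ t.length ∧ t.length ≤ m) ∧
    (∃ t ∈ S, t.length = n) ∧ (∃ t ∈ S, t.length = m)

/-- An admissible family of segments: pairwise disjoint `n–m` segments for a common pair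
`n ≤ m`. -/
def AdmissibleL (F : Finset (Finset (List ℕ))) : Prop :=
  ∃ n m : ℕ, n ≤ m ∧ (∀ S ∈ F, IsNMSeg S n m) ∧
    ∀ S ∈ F, ∀ S' ∈ F, S ≠ S' → Disjoint S S'

/-- The `JH_∞` norm of a finitely supported function on `T`. -/
noncomputable def jhInfNorm (x : (List ℕ) →₀ ℝ) : ℝ :=
  sSup {r : ℝ | ∃ F : Finset (Finset (List ℕ)), AdmissibleL F ∧
    r = ∑ S ∈ F, |∑ t ∈ S, x t|}

/-- `JH_∞` contains an isometric copy of `ℓ₁`: if `(αₙ)` is a sequence of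
pairwise distinct immediate successors of the root `∅` of `T`, then
`‖Σₙ aₙ e_{αₙ}‖ = Σₙ |aₙ|` for every finitely supported scalar sequence, and there is a
linear isometry of `ℓ₁` into `JH_∞` sending the canonical basis to `(e_{αₙ})`. -/
theorem stmt11 (X : Type*) [NormedAddCommGroup X] [NormedSpace ℝ X] [CompleteSpace X]
    (e : List ℕ → X)
    (hnorm : ∀ x : (List ℕ) →₀ ℝ, ‖∑ t ∈ x.support, x t • e t‖ = jhInfNorm x)
    (hdense : Dense (Submodule.span ℝ (Set.range e) : Set X))
    (α : ℕ → List ℕ) (hαinj : Function.Injective α)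
    (hαsucc : ∀ n : ℕ, (α n).length = 1) :
    (∀ a : ℕ →₀ ℝ, ‖∑ n ∈ a.support, a n • e (α n)‖ = ∑ n ∈ a.support, |a n|) ∧
    ∃ Φ : lp (fun _ : ℕ => ℝ) 1 →ₗᵢ[ℝ] X, ∀ n : ℕ, Φ (lp.single 1 n 1) = e (α n) := by
  -- the embedding along α
  set emb : ℕ ↪ List ℕ := ⟨α, hαinj⟩ with hemb
  -- main norm computation
  have key : ∀ a : ℕ →₀ ℝ, ‖∑ n ∈ a.support, a n • e (α n)‖ = ∑ n ∈ a.support, |a n| := by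
    intro a
    set x : (List ℕ) →₀ ℝ := a.embDomain emb with hx
    have hsupp : x.support = a.support.map emb := Finsupp.support_embDomain _ _
    have hxapp : ∀ n, x (α n) = a n := fun n => Finsupp.embDomain_apply_self emb a n
    have hsum_eq : ∑ t ∈ x.support, x t • e t = ∑ n ∈ a.support, a n • e (α n) := by
      rw [hsupp, Finset.sum_map]
      exact Finset.sum_congr rfl fun n _ => by rw [show emb n = α n from rfl, hxapp]
    have habs : ∑ t ∈ x.support, |x t| = ∑ n ∈ a.support, |a n| := by
      rw [hsupp, Finset.sum_map]
      exact Finset.sum_congr rfl fun n _ => by rw [show emb n = α n from rfl, hxapp]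
    -- every admissible sum is bounded by ∑ |a n|
    have hub : ∀ r ∈ {r : ℝ | ∃ F : Finset (Finset (List ℕ)), AdmissibleL F ∧
        r = ∑ S ∈ F, |∑ t ∈ S, x t|}, r ≤ ∑ n ∈ a.support, |a n| := by
      rintro r ⟨F, ⟨n, m, hnm, hseg, hdisj⟩, rfl⟩
      have hpd : (↑F : Set (Finset (List ℕ))).PairwiseDisjoint id := by
        intro S hS S' hS' hne
        exact hdisj S hS S' hS' hne
      calc ∑ S ∈ F, |∑ t ∈ S, x t| ≤ ∑ S ∈ F, ∑ t ∈ S, |x t| :=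
            Finset.sum_le_sum fun S _ => Finset.abs_sum_le_sum_abs _ _
        _ = ∑ t ∈ F.biUnion id, |x t| := (Finset.sum_biUnion hpd).symm
        _ = ∑ t ∈ (F.biUnion id) ∩ x.support, |x t| := by
            refine (Finset.sum_subset Finset.inter_subset_left ?_).symm
            intro t htU htn
            have hx0 : x t = 0 := by
              by_contra h
              exact htn (Finset.mem_inter.2 ⟨htU, Finsupp.mem_support_iff.2 h⟩)
            simp [hx0]
        _ ≤ ∑ t ∈ x.support, |x t| :=
            Finset.sum_le_sum_of_subset_of_nonneg Finset.inter_subset_right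
              (fun _ _ _ => abs_nonneg _)
        _ = ∑ n ∈ a.support, |a n| := habs
    -- the value ∑ |a n| is attained
    have hmem : (∑ n ∈ a.support, |a n|) ∈ {r : ℝ | ∃ F : Finset (Finset (List ℕ)),
        AdmissibleL F ∧ r = ∑ S ∈ F, |∑ t ∈ S, x t|} := by
      refine ⟨a.support.image (fun n => ({α n} : Finset (List ℕ))), ⟨1, 1, le_refl 1, ?_, ?_⟩, ?_⟩
      · intro S hS
        obtain ⟨n, _, rfl⟩ := Finset.mem_image.1 hS
        refine ⟨?_, ?_, ⟨α n, Finset.mem_singleton_self _, hαsucc n⟩,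
          ⟨α n, Finset.mem_singleton_self _, hαsucc n⟩⟩
        · intro s hs t ht
          rw [Finset.mem_singleton] at hs ht
          subst hs; subst ht
          exact Or.inl (List.prefix_refl _)
        · intro t ht
          rw [Finset.mem_singleton] at ht
          subst ht
          exact ⟨le_of_eq (hαsucc n).symm, le_of_eq (hαsucc n)⟩
      · intro S hS S' hS' hne
        obtain ⟨n, _, rfl⟩ := Finset.mem_image.1 hS
        obtain ⟨n', _, rfl⟩ := Finset.mem_image.1 hS'
        rw [Finset.disjoint_singleton]
        intro h
        exact hne (by rw [h])
      · rw [Finset.sum_image (fun n _ m _ h => hαinj (Finset.singleton_injective h))]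
        exact Finset.sum_congr rfl fun n _ => by rw [Finset.sum_singleton, hxapp]
    have hbdd : BddAbove {r : ℝ | ∃ F : Finset (Finset (List ℕ)), AdmissibleL F ∧
        r = ∑ S ∈ F, |∑ t ∈ S, x t|} := ⟨_, hub⟩
    rw [← hsum_eq, hnorm x, jhInfNorm]
    exact le_antisymm (csSup_le ⟨_, hmem⟩ hub) (le_csSup hbdd hmem)
  -- version for arbitrary functions restricted to a finite set
  have keyF : ∀ (s : Finset ℕ) (g : ℕ → ℝ),
      ‖∑ n ∈ s, g n • e (α n)‖ = ∑ n ∈ s, |g n| := by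
    intro s g
    set b : ℕ →₀ ℝ := Finsupp.indicator s (fun n _ => g n) with hb
    have hbsupp : b.support ⊆ s := fun n hn => Finsupp.support_indicator_subset _ _ hn
    have h1 : ∑ n ∈ b.support, b n • e (α n) = ∑ n ∈ s, g n • e (α n) := by
      rw [Finset.sum_subset hbsupp
        (fun n _ hnb => by rw [Finsupp.notMem_support_iff.1 hnb, zero_smul])]
      exact Finset.sum_congr rfl fun n hn => by rw [hb, Finsupp.indicator_of_mem hn]
    have h2 : ∑ n ∈ b.support, |b n| = ∑ n ∈ s, |g n| := by
      rw [Finset.sum_subset hbsupp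
        (fun n _ hnb => by rw [Finsupp.notMem_support_iff.1 hnb, abs_zero])]
      exact Finset.sum_congr rfl fun n hn => by rw [hb, Finsupp.indicator_of_mem hn]
    rw [← h1, ← h2, key b]
  -- norm of each basis vector
  have he1 : ∀ n : ℕ, ‖e (α n)‖ = 1 := by
    intro n
    have := keyF {n} (fun _ => (1 : ℝ))
    simpa using this
  -- summability
  have hsummable : ∀ f : lp (fun _ : ℕ => ℝ) 1, Summable (fun n => f n • e (α n)) := by
    intro f
    have h1 : Summable (fun n => ‖f n‖) := by
      have h := (lp.memℓp f).summable (p := 1) (by norm_num)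
      simpa [ENNReal.toReal_one, Real.rpow_one] using h
    refine Summable.of_norm ?_
    have heq : (fun n => ‖f n • e (α n)‖) = fun n => ‖f n‖ := by
      funext n
      rw [norm_smul, he1, mul_one]
    rwa [heq]
  have hnormsum : ∀ f : lp (fun _ : ℕ => ℝ) 1, HasSum (fun n => ‖f n‖) ‖f‖ := by
    intro f
    have h := lp.hasSum_norm (p := 1) (by norm_num) f
    simpa [ENNReal.toReal_one, Real.rpow_one] using h
  have hΦnorm : ∀ f : lp (fun _ : ℕ => ℝ) 1, ‖∑' n, f n • e (α n)‖ = ‖f‖ := by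
    intro f
    have hs := (hsummable f).hasSum
    have h2 : Filter.Tendsto (fun s : Finset ℕ => ‖∑ n ∈ s, f n • e (α n)‖)
        Filter.atTop (nhds ‖∑' n, f n • e (α n)‖) :=
      continuous_norm.continuousAt.tendsto.comp hs
    have h3 : HasSum (fun n => ‖f n‖) ‖∑' n, f n • e (α n)‖ := by
      refine h2.congr fun s => ?_
      rw [keyF s (fun n => f n)]
      exact Finset.sum_congr rfl fun n _ => (Real.norm_eq_abs _).symm
    exact h3.unique (hnormsum f)
  constructor
  · exact key
  · refine ⟨⟨⟨⟨fun f => ∑' n, f n • e (α n), ?_⟩, ?_⟩, ?_⟩, ?_⟩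
    · -- additivity
      intro f g
      have heq : (fun n => ((f + g : lp (fun _ : ℕ => ℝ) 1) n) • e (α n)) =
          fun n => f n • e (α n) + g n • e (α n) := by
        funext n
        rw [lp.coeFn_add]
        simp [add_smul]
      simp only [heq]
      exact ((hsummable f).hasSum.add (hsummable g).hasSum).tsum_eq
    · -- smul
      intro c f
      have heq : (fun n => ((c • f : lp (fun _ : ℕ => ℝ) 1) n) • e (α n)) =
          fun n => c • (f n • e (α n)) := by
        funext n
        rw [lp.coeFn_smul]
        simp [smul_smul]
      simp only [heq, RingHom.id_apply]
      exact ((hsummable f).hasSum.const_smul c).tsum_eq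
    · -- isometry
      intro f
      exact hΦnorm f
    · -- basis vectors
      intro n
      simp only [LinearIsometry.coe_mk, LinearMap.coe_mk, AddHom.coe_mk]
      rw [tsum_eq_single n]
      · rw [lp.single_apply_self, one_smul]
      · intro m hmn
        rw [lp.single_apply_ne 1 n 1 hmn, zero_smul]
end

section
/- Let M be the closed subspace of JH_∞ obtained as the completion of the finitely supported functions on T vanishing at the root ∅. Then the set A of functionals Σᵢ λᵢ f_{Sᵢ}, where λᵢ ∈ {−1,1} and {S₁,…,Sₙ} is an admissible family of segments none of which contains ∅, is a norming subset of B_{M*}; hence B_{M*} is the w*-closed convex hull of A. -/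
open Metric

/-! ### Auxiliary lemmas -/

/-- The set of values over which the `JH_∞` norm is a supremum. -/
def jhSet (x : (List ℕ) →₀ ℝ) : Set ℝ :=
  {r : ℝ | ∃ F : Finset (Finset (List ℕ)), AdmissibleL F ∧
    r = ∑ S ∈ F, |∑ t ∈ S, x t|}

lemma jhInfNorm_eq (x : (List ℕ) →₀ ℝ) : jhInfNorm x = sSup (jhSet x) := rfl

lemma jh_mem_zero (x : (List ℕ) →₀ ℝ) : (0:ℝ) ∈ jhSet x :=
  ⟨∅, ⟨0, 0, le_refl _, by simp, by simp⟩, by simp⟩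

lemma jh_nonempty (x : (List ℕ) →₀ ℝ) : (jhSet x).Nonempty := ⟨0, jh_mem_zero x⟩

lemma jh_bdd_aux (x : (List ℕ) →₀ ℝ) {F : Finset (Finset (List ℕ))}
    (hF : AdmissibleL F) :
    ∑ S ∈ F, |∑ t ∈ S, x t| ≤ ∑ t ∈ x.support, |x t| := by
  obtain ⟨n, m, _, _, hdisj⟩ := hF
  calc ∑ S ∈ F, |∑ t ∈ S, x t|
      ≤ ∑ S ∈ F, ∑ t ∈ S ∩ x.support, |x t| := by
        refine Finset.sum_le_sum fun S _ => ?_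
        have h1 : ∑ t ∈ S, x t = ∑ t ∈ S ∩ x.support, x t := by
          refine (Finset.sum_subset Finset.inter_subset_left ?_).symm
          intro t ht hnt
          by_contra h
          exact hnt (Finset.mem_inter.2 ⟨ht, Finsupp.mem_support_iff.2 h⟩)
        rw [h1]
        exact Finset.abs_sum_le_sum_abs _ _
    _ = ∑ t ∈ F.biUnion (fun S => S ∩ x.support), |x t| := by
        rw [Finset.sum_biUnion]
        intro S hS S' hS' hne
        exact Finset.disjoint_of_subset_left Finset.inter_subset_left
          (Finset.disjoint_of_subset_right Finset.inter_subset_left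
            (hdisj S hS S' hS' hne))
    _ ≤ ∑ t ∈ x.support, |x t| := by
        refine Finset.sum_le_sum_of_subset_of_nonneg ?_ (fun t _ _ => abs_nonneg _)
        exact Finset.biUnion_subset.2 fun S _ => Finset.inter_subset_right

lemma jh_bddAbove (x : (List ℕ) →₀ ℝ) : BddAbove (jhSet x) := by
  refine ⟨∑ t ∈ x.support, |x t|, ?_⟩
  rintro r ⟨F, hF, rfl⟩
  exact jh_bdd_aux x hF

lemma jh_le (x : (List ℕ) →₀ ℝ) {F : Finset (Finset (List ℕ))} (hF : AdmissibleL F) :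
    ∑ S ∈ F, |∑ t ∈ S, x t| ≤ jhInfNorm x :=
  le_csSup (jh_bddAbove x) ⟨F, hF, rfl⟩

/-- Key observation: an admissible family can be replaced by one whose segments avoid the
root, without decreasing the associated value (for `x` vanishing at the root). -/
lemma exists_good_family (x : (List ℕ) →₀ ℝ) (hx0 : x [] = 0)
    (F : Finset (Finset (List ℕ))) (hF : AdmissibleL F) :
    ∃ F', AdmissibleL F' ∧ (∀ S ∈ F', ([]:List ℕ) ∉ S) ∧
      ∑ S ∈ F, |∑ t ∈ S, x t| ≤ ∑ S ∈ F', |∑ t ∈ S, x t| := by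
  by_cases hroot : ∀ S ∈ F, ([]:List ℕ) ∉ S
  · exact ⟨F, hF, hroot, le_refl _⟩
  push_neg at hroot
  obtain ⟨S₀, hS₀F, hS₀⟩ := hroot
  obtain ⟨n, m, hnm, hseg, hdisj⟩ := hF
  have hn0 : n = 0 := Nat.le_zero.mp (by simpa using ((hseg S₀ hS₀F).2.1 [] hS₀).1)
  have hF1 : F = {S₀} := by
    refine Finset.eq_singleton_iff_unique_mem.2 ⟨hS₀F, fun S hS => ?_⟩
    obtain ⟨t, htS, htlen⟩ := (hseg S hS).2.2.1
    have ht : t = [] := List.length_eq_zero_iff.mp (by rw [htlen, hn0])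
    subst ht
    by_contra hne
    exact (Finset.disjoint_left.mp (hdisj S hS S₀ hS₀F hne) htS) hS₀
  subst hF1
  rw [Finset.sum_singleton]
  set S' := S₀.erase [] with hS'def
  have hsum : ∑ t ∈ S', x t = ∑ t ∈ S₀, x t := Finset.sum_erase _ hx0
  rcases eq_or_ne S' ∅ with hS' | hS'
  · refine ⟨∅, ⟨0, 0, le_refl _, by simp, by simp⟩, by simp, ?_⟩
    rw [← hsum, hS']
    simp
  · have hS'ne : S'.Nonempty := Finset.nonempty_iff_ne_empty.2 hS'
    set L := S'.image List.length with hLdef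
    have hL : L.Nonempty := hS'ne.image _
    refine ⟨{S'}, ⟨L.min' hL, L.max' hL, ?_, ?_, ?_⟩, ?_, ?_⟩
    · exact Finset.min'_le L _ (L.max'_mem hL)
    · intro S hS
      rw [Finset.mem_singleton] at hS
      subst hS
      refine ⟨fun s hs t ht => (hseg S₀ hS₀F).1 s (Finset.mem_of_mem_erase hs) t
        (Finset.mem_of_mem_erase ht), fun t ht => ⟨Finset.min'_le L _
        (Finset.mem_image_of_mem _ ht), Finset.le_max' L _ (Finset.mem_image_of_mem _ ht)⟩,
        ?_, ?_⟩
      · obtain ⟨t, ht, hlen⟩ := Finset.mem_image.mp (L.min'_mem hL)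
        exact ⟨t, ht, hlen⟩
      · obtain ⟨t, ht, hlen⟩ := Finset.mem_image.mp (L.max'_mem hL)
        exact ⟨t, ht, hlen⟩
    · intro S hS S'' hS'' hne
      rw [Finset.mem_singleton] at hS hS''
      exact absurd (hS.trans hS''.symm) hne
    · intro S hS
      rw [Finset.mem_singleton] at hS
      subst hS
      exact Finset.notMem_erase _ _
    · rw [Finset.sum_singleton, hsum]

/-- The norming construction on the level of finitely supported functions. -/
lemma norming_core (x : (List ℕ) →₀ ℝ) (hx0 : x [] = 0) (δ : ℝ) (hδ : 0 < δ) :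
    ∃ (F : Finset (Finset (List ℕ))) (σ : Finset (List ℕ) → ℝ),
      AdmissibleL F ∧ (∀ S ∈ F, ([]:List ℕ) ∉ S) ∧
      (∀ S ∈ F, σ S = 1 ∨ σ S = -1) ∧
      jhInfNorm x - δ < ∑ S ∈ F, σ S * (∑ t ∈ S, x t) := by
  have h1 : jhInfNorm x - δ < sSup (jhSet x) := by
    rw [jhInfNorm_eq]; linarith
  obtain ⟨r, hrmem, hr⟩ := exists_lt_of_lt_csSup (jh_nonempty x) h1
  obtain ⟨F, hF, rfl⟩ := hrmem
  obtain ⟨F', hF', hroot, hle⟩ := exists_good_family x hx0 F hF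
  refine ⟨F', fun S => if 0 ≤ ∑ t ∈ S, x t then 1 else -1, hF', hroot,
    fun S _ => by by_cases h : 0 ≤ ∑ t ∈ S, x t <;> simp [h], ?_⟩
  have heq : ∑ S ∈ F', (if 0 ≤ ∑ t ∈ S, x t then (1:ℝ) else -1) * (∑ t ∈ S, x t)
      = ∑ S ∈ F', |∑ t ∈ S, x t| := by
    refine Finset.sum_congr rfl fun S _ => ?_
    split
    · rw [one_mul, abs_of_nonneg ‹_›]
    · rw [neg_one_mul, abs_of_neg (lt_of_not_ge ‹_›)]
  rw [heq]
  linarith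

/-- Evaluation of `f_S` on a finite linear combination of basis vectors. -/
lemma eval_fS {X : Type*} [NormedAddCommGroup X] [NormedSpace ℝ X]
    (e : List ℕ → X) (fS : Finset (List ℕ) → (X →L[ℝ] ℝ))
    (hfS : ∀ S : Finset (List ℕ), SegL S → ∀ t : List ℕ, t ≠ [] →
      fS S (e t) = if t ∈ S then 1 else 0)
    (l : (List ℕ) →₀ ℝ) (hl0 : l [] = 0) (S : Finset (List ℕ)) (hS : SegL S) :
    fS S (∑ t ∈ l.support, l t • e t) = ∑ t ∈ S, l t := by
  rw [map_sum]
  have h1 : ∀ t ∈ l.support, fS S (l t • e t) = if t ∈ S then l t else 0 := by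
    intro t ht
    have htne : t ≠ [] := fun h => (Finsupp.mem_support_iff.1 ht) (h ▸ hl0)
    rw [map_smul, hfS S hS t htne]
    simp [smul_eq_mul, mul_ite]
  rw [Finset.sum_congr rfl h1, Finset.sum_ite_mem]
  refine Finset.sum_subset Finset.inter_subset_right fun t ht hnt => ?_
  by_contra h
  exact hnt (Finset.mem_inter.2 ⟨Finsupp.mem_support_iff.2 h, ht⟩)

/-- Every continuous linear functional on the weak-star dual is an evaluation. -/
lemma weakdual_eval (X : Type*) [NormedAddCommGroup X] [NormedSpace ℝ X]
    (φ : WeakDual ℝ X →L[ℝ] ℝ) : ∃ z : X, ∀ g : WeakDual ℝ X, φ g = g z := by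
  classical
  set B := topDualPairing ℝ X with hB
  have hp : WithSeminorms (LinearMap.toSeminormFamily B : X → Seminorm ℝ (WeakDual ℝ X)) :=
    B.weakBilin_withSeminorms
  set q : Seminorm ℝ (WeakDual ℝ X) := (normSeminorm ℝ ℝ).comp φ.toLinearMap with hq
  have hqc : Continuous q := φ.continuous.norm
  obtain ⟨s, C, hC0, hCle⟩ := Seminorm.bound_of_continuous hp q hqc
  set L : {t // t ∈ s} → (WeakDual ℝ X →ₗ[ℝ] ℝ) :=
    fun i => { toFun := fun g => g (i : X),
               map_add' := fun a b => rfl,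
               map_smul' := fun c a => rfl } with hL
  have hker : ⨅ i : {t // t ∈ s}, LinearMap.ker (L i)
      ≤ LinearMap.ker (φ : WeakDual ℝ X →ₗ[ℝ] ℝ) := by
    intro g hg
    simp only [Submodule.mem_iInf, LinearMap.mem_ker] at hg ⊢
    have hsup : (s.sup (LinearMap.toSeminormFamily B)) g = 0 := by
      refine le_antisymm ?_ (apply_nonneg _ _)
      refine Seminorm.finset_sup_apply_le le_rfl fun i hi => ?_
      have : (g : X → ℝ) i = 0 := hg ⟨i, hi⟩
      erw [LinearMap.toSeminormFamily_apply]
      simp [hB, topDualPairing_apply, this]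
      exact this
    have h1 : q g ≤ (C • s.sup (LinearMap.toSeminormFamily B)) g := hCle g
    change q g ≤ C • (s.sup (LinearMap.toSeminormFamily B)) g at h1
    rw [hsup, smul_zero] at h1
    have h2 : ‖φ g‖ ≤ 0 := h1
    simpa using le_antisymm h2 (norm_nonneg _)
  have hspan := mem_span_of_iInf_ker_le_ker hker
  rw [Finsupp.mem_span_range_iff_exists_finsupp] at hspan
  obtain ⟨c, hc⟩ := hspan
  refine ⟨c.sum fun i r => r • (i : X), fun g => ?_⟩
  have h2 := LinearMap.congr_fun hc g
  simp only [Finsupp.sum, LinearMap.coe_sum, Finset.sum_apply, LinearMap.smul_apply,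
    smul_eq_mul] at h2 ⊢
  have h3 : φ g = ∑ x ∈ c.support, c x * (L x) g := h2.symm
  rw [h3, map_sum]
  refine Finset.sum_congr rfl fun i _ => ?_
  rw [map_smul]
  rfl

/-- Let `M` be the hyperplane of `JH_∞` obtained by completing the
finitely supported functions vanishing at the root `∅`. The set `A` of functionals
`Σᵢ λᵢ f_{Sᵢ}`, with `λᵢ ∈ {-1,1}` and `{S₁, …, Sₙ}` an admissible family of segments none
containing `∅`, is contained in `B_{M*}` and is norming; hence `B_{M*}` is the w*-closed
convex hull of `A`. -/
theorem stmt13 (X : Type*) [NormedAddCommGroup X] [NormedSpace ℝ X] [CompleteSpace X]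
    (e : List ℕ → X)
    (hnorm : ∀ x : (List ℕ) →₀ ℝ, x [] = 0 → ‖∑ t ∈ x.support, x t • e t‖ = jhInfNorm x)
    (hdense : Dense (Submodule.span ℝ (e '' {t : List ℕ | t ≠ []}) : Set X))
    (fS : Finset (List ℕ) → (X →L[ℝ] ℝ))
    (hfS : ∀ S : Finset (List ℕ), SegL S → ∀ t : List ℕ, t ≠ [] →
      fS S (e t) = if t ∈ S then 1 else 0)
    (A : Set (X →L[ℝ] ℝ))
    (hA : A = {g : X →L[ℝ] ℝ | ∃ (F : Finset (Finset (List ℕ)))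
        (σ : Finset (List ℕ) → ℝ), AdmissibleL F ∧ (∀ S ∈ F, ([] : List ℕ) ∉ S) ∧
        (∀ S ∈ F, σ S = 1 ∨ σ S = -1) ∧ g = ∑ S ∈ F, σ S • fS S}) :
    A ⊆ closedBall (0 : X →L[ℝ] ℝ) 1 ∧
    (∀ x : X, ∀ ε : ℝ, 0 < ε → ∃ g ∈ A, g x > ‖x‖ - ε) ∧
    closure (StrongDual.toWeakDual '' (convexHull ℝ A)) =
      StrongDual.toWeakDual '' (closedBall (0 : X →L[ℝ] ℝ) 1) := by
  classical
  -- every element of `A` has norm at most one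
  have hAball : ∀ g ∈ A, ‖g‖ ≤ 1 := by
    intro g hg
    rw [hA] at hg
    obtain ⟨F, σ, hF, hroot, hσ, rfl⟩ := hg
    set g : X →L[ℝ] ℝ := ∑ S ∈ F, σ S • fS S with hgdef
    refine ContinuousLinearMap.opNorm_le_bound _ zero_le_one fun v => ?_
    rw [one_mul]
    have hC : IsClosed {v : X | ‖g v‖ ≤ ‖v‖} := isClosed_le g.continuous.norm continuous_norm
    have hspan : (Submodule.span ℝ (e '' {t : List ℕ | t ≠ []}) : Set X)
        ⊆ {v : X | ‖g v‖ ≤ ‖v‖} := by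
      intro w hw
      rw [SetLike.mem_coe, Finsupp.mem_span_image_iff_linearCombination] at hw
      obtain ⟨l, hlsupp, rfl⟩ := hw
      have hl0 : l [] = 0 := by
        by_contra h
        exact (Finsupp.mem_supported ℝ l).1 hlsupp (Finsupp.mem_support_iff.2 h) rfl
      have hlin : (Finsupp.linearCombination ℝ e) l = ∑ t ∈ l.support, l t • e t := rfl
      obtain ⟨n, m, hnm, hseg, hdisj⟩ := hF
      have happ : g (∑ t ∈ l.support, l t • e t) = ∑ S ∈ F, σ S * (∑ t ∈ S, l t) := by
        rw [hgdef, ContinuousLinearMap.sum_apply]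
        refine Finset.sum_congr rfl fun S hS => ?_
        rw [ContinuousLinearMap.smul_apply,
          eval_fS e fS hfS l hl0 S (hseg S hS).1, smul_eq_mul]
      rw [Set.mem_setOf_eq, hlin, happ, hnorm l hl0, Real.norm_eq_abs]
      calc |∑ S ∈ F, σ S * ∑ t ∈ S, l t| ≤ ∑ S ∈ F, |σ S * ∑ t ∈ S, l t| :=
            Finset.abs_sum_le_sum_abs _ _
        _ = ∑ S ∈ F, |∑ t ∈ S, l t| := by
            refine Finset.sum_congr rfl fun S hS => ?_
            rcases hσ S hS with h | h <;> rw [abs_mul, h] <;> simp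
        _ ≤ jhInfNorm l := jh_le l ⟨n, m, hnm, hseg, hdisj⟩
    have hsub : Set.univ ⊆ {v : X | ‖g v‖ ≤ ‖v‖} := by
      rw [← hdense.closure_eq]
      exact closure_minimal hspan hC
    exact hsub (Set.mem_univ v)
  have part1 : A ⊆ closedBall (0 : X →L[ℝ] ℝ) 1 := fun g hg =>
    mem_closedBall_zero_iff.2 (hAball g hg)
  -- the norming property
  have part2 : ∀ x : X, ∀ ε : ℝ, 0 < ε → ∃ g ∈ A, g x > ‖x‖ - ε := by
    intro v ε hε
    have hv : v ∈ closure (Submodule.span ℝ (e '' {t : List ℕ | t ≠ []}) : Set X) := hdense v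
    rw [Metric.mem_closure_iff] at hv
    obtain ⟨w, hwmem, hdist⟩ := hv (ε/3) (by linarith)
    rw [SetLike.mem_coe, Finsupp.mem_span_image_iff_linearCombination] at hwmem
    obtain ⟨l, hlsupp, rfl⟩ := hwmem
    have hl0 : l [] = 0 := by
      by_contra h
      exact (Finsupp.mem_supported ℝ l).1 hlsupp (Finsupp.mem_support_iff.2 h) rfl
    have hlin : (Finsupp.linearCombination ℝ e) l = ∑ t ∈ l.support, l t • e t := rfl
    obtain ⟨F, σ, hF, hroot, hσ, hgt⟩ := norming_core l hl0 (ε/3) (by linarith)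
    set g : X →L[ℝ] ℝ := ∑ S ∈ F, σ S • fS S with hgdef
    have hgA : g ∈ A := by
      rw [hA]; exact ⟨F, σ, hF, hroot, hσ, rfl⟩
    refine ⟨g, hgA, ?_⟩
    obtain ⟨n, m, hnm, hseg, hdisj⟩ := hF
    set w := (Finsupp.linearCombination ℝ e) l with hwdef
    have hlin2 : w = ∑ t ∈ l.support, l t • e t := rfl
    have happ : g w = ∑ S ∈ F, σ S * (∑ t ∈ S, l t) := by
      rw [hlin2, hgdef, ContinuousLinearMap.sum_apply]
      refine Finset.sum_congr rfl fun S hS => ?_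
      rw [ContinuousLinearMap.smul_apply,
        eval_fS e fS hfS l hl0 S (hseg S hS).1, smul_eq_mul]
    have hwnorm : ‖w‖ = jhInfNorm l := by rw [hlin2]; exact hnorm l hl0
    have h8 : g w > ‖w‖ - ε/3 := by rw [happ, hwnorm]; exact hgt
    have h3 : ‖g‖ ≤ 1 := hAball g hgA
    have h4 : ‖g (v - w)‖ ≤ ‖v - w‖ := by
      calc ‖g (v - w)‖ ≤ ‖g‖ * ‖v - w‖ := g.le_opNorm _
        _ ≤ 1 * ‖v - w‖ := by
            exact mul_le_mul_of_nonneg_right h3 (norm_nonneg _)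
        _ = ‖v - w‖ := one_mul _
    have h5 : g (v - w) = g v - g w := map_sub g v w
    have h6 : ‖v‖ - ‖w‖ ≤ ‖v - w‖ := norm_sub_norm_le v w
    have h7 : dist v w = ‖v - w‖ := dist_eq_norm v w
    have h9 : -(‖v - w‖) ≤ g (v - w) := by
      have h10 : |g (v - w)| ≤ ‖v - w‖ := by rw [← Real.norm_eq_abs]; exact h4
      exact (abs_le.1 h10).1
    linarith
  refine ⟨part1, part2, ?_⟩
  -- the weak-star closed convex hull
  haveI : LocallyConvexSpace ℝ (WeakDual ℝ X) := WeakBilin.locallyConvexSpace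
  set D := StrongDual.toWeakDual '' (closedBall (0 : X →L[ℝ] ℝ) 1) with hD
  have hDeq : D = WeakDual.toStrongDual ⁻¹' (closedBall (0 : X →L[ℝ] ℝ) 1) := by
    ext g
    constructor
    · rintro ⟨h, hh, rfl⟩
      exact hh
    · intro hg
      exact ⟨WeakDual.toStrongDual g, hg, rfl⟩
  have hDcompact : IsCompact D := by
    rw [hDeq]
    exact WeakDual.isCompact_closedBall (𝕜 := ℝ) (E := X) 0 1
  have hDclosed : IsClosed D := hDcompact.isClosed
  set K := closure (StrongDual.toWeakDual '' (convexHull ℝ A)) with hK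
  refine le_antisymm ?_ ?_
  · refine closure_minimal ?_ hDclosed
    exact Set.image_mono (convexHull_min part1 (convex_closedBall 0 1))
  · rintro g₀' ⟨g₀, hg₀, rfl⟩
    by_contra hnot
    have hKconv : Convex ℝ K := by
      refine Convex.closure ?_
      have h := (convex_convexHull ℝ A).linear_image
        (StrongDual.toWeakDual :
          StrongDual ℝ X ≃ₗ[ℝ] WeakDual ℝ X).toLinearMap
      simpa using h
    obtain ⟨φ, u, hKlt, hu⟩ := geometric_hahn_banach_closed_point hKconv isClosed_closure hnot
    obtain ⟨z, hz⟩ := weakdual_eval X φ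
    have h1 : u < g₀ z := by
      rw [hz] at hu
      exact hu
    have hg₀norm : ‖g₀‖ ≤ 1 := mem_closedBall_zero_iff.1 hg₀
    have h2 : g₀ z ≤ ‖z‖ := by
      calc g₀ z ≤ |g₀ z| := le_abs_self _
        _ = ‖g₀ z‖ := (Real.norm_eq_abs _).symm
        _ ≤ ‖g₀‖ * ‖z‖ := g₀.le_opNorm _
        _ ≤ 1 * ‖z‖ := mul_le_mul_of_nonneg_right hg₀norm (norm_nonneg _)
        _ = ‖z‖ := one_mul _
    obtain ⟨h, hhA, hhz⟩ := part2 z (‖z‖ - u) (by linarith)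
    have hhK : StrongDual.toWeakDual h ∈ K :=
      subset_closure ⟨h, subset_convexHull ℝ A hhA, rfl⟩
    have hlt := hKlt _ hhK
    rw [hz] at hlt
    have : h z < u := hlt
    linarith
end
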